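/- arXiv:1407.0777 — 3 statements merged into one kernel-verified Lean document; each statement's English description precedes it below -/
import Mathlib

section
/- Let k ≥ 1 and let Q = (q_n) be a basic sequence that is infinite in limit. Suppose x = E_0.E_1E_2… w.r.t. Q is Q-normal of order k. Then there exists a real number y = F_0.F_1F_2… w.r.t. Q such that the set {n ≥ 1 : E_n ≠ F_n} has density zero and y is not Q-normal of order j for any j ≥ 1. -/
open Filter Finset MeasureTheory

noncomputable section
open scoped Classical

/-- `cantorProd q n = q 1 * q 2 * ... * q n` (empty product for `n = 0`). -/
def cantorProd (q : ℕ → ℕ) (n : ℕ) : ℕ := ∏ j ∈ Finset.Icc 1 n, q j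

/-- `T_{Q,n}(x) = q_1 q_2 ⋯ q_n · x (mod 1)`. -/
def TQ (q : ℕ → ℕ) (n : ℕ) (x : ℝ) : ℝ := Int.fract ((cantorProd q n : ℝ) * x)

/-- A basic sequence: `q n ≥ 2` for all `n ≥ 1`. -/
def BasicSeq (q : ℕ → ℕ) : Prop := ∀ n, 1 ≤ n → 2 ≤ q n

/-- `Q` is infinite in limit: `q n → ∞`. -/
def InfiniteInLimit (q : ℕ → ℕ) : Prop := Filter.Tendsto q Filter.atTop Filter.atTop

/-- `E` (indexed from 1) is the sequence of digits of the `Q`-Cantor series expansion of `x`: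
`E n ∈ {0, …, q n − 1}`, `E n ≠ q n − 1` infinitely often, and
`x = ⌊x⌋ + ∑_{n ≥ 1} E n / (q 1 ⋯ q n)`. -/
def IsCantorDigits (q : ℕ → ℕ) (E : ℕ → ℕ) (x : ℝ) : Prop :=
  (∀ n, 1 ≤ n → E n < q n) ∧
  {n | 1 ≤ n ∧ E n ≠ q n - 1}.Infinite ∧
  x = (⌊x⌋ : ℝ) + ∑' n : ℕ, (E (n + 1) : ℝ) / (cantorProd q (n + 1) : ℝ)

/-- `Q_n^{(k)} = ∑_{j=1}^n 1/(q_j q_{j+1} ⋯ q_{j+k-1})`. -/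
def Qnk (q : ℕ → ℕ) (k n : ℕ) : ℝ :=
  ∑ j ∈ Finset.Icc 1 n, 1 / ∏ i ∈ Finset.Ico j (j + k), (q i : ℝ)

/-- `Q` is `k`-divergent. -/
def KDivergent (q : ℕ → ℕ) (k : ℕ) : Prop :=
  Filter.Tendsto (fun n => Qnk q k n) Filter.atTop Filter.atTop

/-- `N_n^Q(B, x)`: the number of indices `1 ≤ i ≤ n - |B| + 1` at which the block `B`
occurs in the digit sequence `E`. -/
def blockCount (E : ℕ → ℕ) (B : List ℕ) (n : ℕ) : ℕ :=
  ((Finset.Icc 1 (n + 1 - B.length)).filter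
    (fun i => ∀ t, t < B.length → E (i + t) = B.getD t 0)).card

/-- The digit sequence `E` is `Q`-normal of order `k`. -/
def QNormalOfOrder (q : ℕ → ℕ) (E : ℕ → ℕ) (k : ℕ) : Prop :=
  ∀ B : List ℕ, B.length = k →
    Filter.Tendsto (fun n => (blockCount E B n : ℝ) / Qnk q k n) Filter.atTop (nhds 1)

/-- A sequence (indexed from 0) is uniformly distributed mod 1. -/
def UDMod1 (z : ℕ → ℝ) : Prop :=
  ∀ a b : ℝ, 0 ≤ a → a < b → b ≤ 1 →
    Filter.Tendsto
      (fun N => (((Finset.range N).filter (fun n => Int.fract (z n) ∈ Set.Ico a b)).card : ℝ) / N)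
      Filter.atTop (nhds (b - a))

/-- `x` is `Q`-distribution normal: `(T_{Q,n}(x))_{n ≥ 0}` is uniformly distributed mod 1. -/
def QDistNormal (q : ℕ → ℕ) (x : ℝ) : Prop := UDMod1 (fun n => TQ q n x)

/-- A set of natural numbers has (natural) density zero. -/
def DensityZero (A : Set ℕ) : Prop :=
  Filter.Tendsto (fun N => (((Finset.Icc 1 N).filter (fun n => n ∈ A)).card : ℝ) / N)
    Filter.atTop (nhds 0)

/-- The `n`-th digit (for `n ≥ 1`) of the `Q`-Cantor series expansion of `x`,
extracted via `E_n = ⌊q_n · T_{Q,n-1}(x)⌋`. -/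
def cantorDigit (q : ℕ → ℕ) (x : ℝ) (n : ℕ) : ℤ := ⌊(q n : ℝ) * TQ q (n - 1) x⌋

/-- `ψ_{P,Q}(x) = ∑_{n ≥ 1} min(E_n, q_n − 1)/(q_1 ⋯ q_n)`, where `E` are the `P`-digits of `x`. -/
def psiMap (p q : ℕ → ℕ) (x : ℝ) : ℝ :=
  ∑' n : ℕ, ((min (cantorDigit p x (n + 1)) ((q (n + 1) : ℤ) - 1) : ℤ) : ℝ) /
    (cantorProd q (n + 1) : ℝ)

/-- `N_n^Q(B, x)` defined via the canonical digits of the real number `x`. -/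
def blockCountReal (q : ℕ → ℕ) (x : ℝ) (B : List ℕ) (n : ℕ) : ℕ :=
  ((Finset.Icc 1 (n + 1 - B.length)).filter
    (fun i => ∀ t, t < B.length → cantorDigit q x (i + t) = (B.getD t 0 : ℤ))).card

/-- The real number `x` is `Q`-normal of order `k`. -/
def QNormalOfOrderReal (q : ℕ → ℕ) (x : ℝ) (k : ℕ) : Prop :=
  ∀ B : List ℕ, B.length = k →
    Filter.Tendsto (fun n => (blockCountReal q x B n : ℝ) / Qnk q k n) Filter.atTop (nhds 1)

/-- The discrepancy `D_N` of the finite sequence `x 1, …, x N` (of numbers in `[0,1)`). -/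
def discrepancy (N : ℕ) (x : ℕ → ℝ) : ℝ :=
  sSup {d : ℝ | ∃ a b : ℝ, 0 ≤ a ∧ a ≤ b ∧ b ≤ 1 ∧
    d = |(((Finset.Icc 1 N).filter (fun n => x n ∈ Set.Ico a b)).card : ℝ) / N - (b - a)|}

namespace Stmt0Aux

lemma card_filter_mono {s : Finset ℕ} {p r : ℕ → Prop} {ip : DecidablePred p}
    {ir : DecidablePred r} (h : ∀ x ∈ s, p x → r x) :
    (@Finset.filter _ p ip s).card ≤ (@Finset.filter _ r ir s).card := by
  apply Finset.card_le_card
  intro x hx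
  rw [Finset.mem_filter] at hx ⊢
  exact ⟨hx.1, h x hx.1 hx.2⟩

variable (q : ℕ → ℕ)

lemma qR_ge (hq : BasicSeq q) {i : ℕ} (hi : 1 ≤ i) : (2:ℝ) ≤ (q i : ℝ) := by
  exact_mod_cast hq i hi

lemma prodIco_pos (hq : BasicSeq q) {a b : ℕ} (ha : 1 ≤ a) :
    (0:ℝ) < ∏ i ∈ Finset.Ico a b, (q i : ℝ) := by
  apply Finset.prod_pos
  intro i hi
  have : 1 ≤ i := le_trans ha (Finset.mem_Ico.1 hi).1
  linarith [qR_ge q hq this]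

lemma Qnk_nonneg (hq : BasicSeq q) (k n : ℕ) : 0 ≤ Qnk q k n := by
  apply Finset.sum_nonneg
  intro j hj
  have hj1 : 1 ≤ j := (Finset.mem_Icc.1 hj).1
  have := prodIco_pos q hq (b := j + k) hj1
  positivity

lemma Qnk_mono (hq : BasicSeq q) (k : ℕ) : Monotone (Qnk q k) := by
  intro a b hab
  apply Finset.sum_le_sum_of_subset_of_nonneg
  · exact Finset.Icc_subset_Icc_right hab
  · intro j hj _
    have hj1 : 1 ≤ j := (Finset.mem_Icc.1 hj).1
    have := prodIco_pos q hq (b := j + k) hj1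
    positivity

lemma Qnk_pos (hq : BasicSeq q) (k : ℕ) {n : ℕ} (hn : 1 ≤ n) : 0 < Qnk q k n := by
  apply Finset.sum_pos'
  · intro j hj
    have hj1 : 1 ≤ j := (Finset.mem_Icc.1 hj).1
    have := prodIco_pos q hq (b := j + k) hj1
    positivity
  · refine ⟨1, Finset.mem_Icc.2 ⟨le_refl 1, hn⟩, ?_⟩
    have := prodIco_pos q hq (a := 1) (b := 1 + k) le_rfl
    positivity

lemma Qnk_le_Qnk_one (hq : BasicSeq q) {j : ℕ} (hj : 1 ≤ j) (n : ℕ) :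
    Qnk q j n ≤ Qnk q 1 n := by
  apply Finset.sum_le_sum
  intro i hi
  have hi1 : 1 ≤ i := (Finset.mem_Icc.1 hi).1
  have hpos : (0:ℝ) < ∏ t ∈ Finset.Ico i (i + j), (q t : ℝ) := prodIco_pos q hq hi1
  have hq1 : (0:ℝ) < ∏ t ∈ Finset.Ico i (i + 1), (q t : ℝ) := prodIco_pos q hq hi1
  apply div_le_div_of_nonneg_left (by norm_num) hq1
  rw [Nat.Ico_succ_singleton, Finset.prod_singleton]
  have hnat : q i ≤ ∏ t ∈ Finset.Ico i (i + j), q t := by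
    apply Finset.single_le_prod' (f := fun t => q t)
    · intro t ht
      have h1t : 1 ≤ t := le_trans hi1 (Finset.mem_Ico.1 ht).1
      have := hq t h1t; omega
    · exact Finset.mem_Ico.2 ⟨le_refl i, by omega⟩
  calc (q i : ℝ) ≤ ((∏ t ∈ Finset.Ico i (i + j), q t : ℕ) : ℝ) := by exact_mod_cast hnat
  _ = ∏ t ∈ Finset.Ico i (i + j), (q t : ℝ) := by push_cast; ring

lemma Qnk_one_eq (n : ℕ) : Qnk q 1 n = ∑ i ∈ Finset.range n, ((q (i+1) : ℝ))⁻¹ := by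
  induction n with
  | zero => simp [Qnk]
  | succ n ih =>
      rw [Qnk, Finset.sum_Icc_succ_top (by omega), ← Qnk, ih, Finset.sum_range_succ,
        Nat.Ico_succ_singleton, Finset.prod_singleton, one_div]

/-- Cesàro: the average of `Qnk q 1` tends to zero. -/
lemma Qnk_one_avg (hq : BasicSeq q) (hinf : InfiniteInLimit q) :
    Filter.Tendsto (fun n : ℕ => (n:ℝ)⁻¹ * Qnk q 1 n) Filter.atTop (nhds 0) := by
  have h1 : Filter.Tendsto (fun i : ℕ => ((q (i+1) : ℝ))⁻¹) Filter.atTop (nhds 0) := by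
    apply Filter.Tendsto.inv_tendsto_atTop
    apply Filter.Tendsto.comp tendsto_natCast_atTop_atTop
    exact hinf.comp (Filter.tendsto_add_atTop_nat 1)
  have := h1.cesaro
  simpa only [← Qnk_one_eq] using this

/-- least `N` such that `100 (m+1) Qnk q 1 n ≤ n` for all `n ≥ N`. -/
def NNaux (m : ℕ) : ℕ :=
  if h : ∃ N : ℕ, ∀ n, N ≤ n → (100 * ((m:ℝ)+1)) * Qnk q 1 n ≤ (n:ℝ) then h.choose else 0

lemma NNaux_exists (hq : BasicSeq q) (hinf : InfiniteInLimit q) (m : ℕ) :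
    ∃ N : ℕ, ∀ n, N ≤ n → (100 * ((m:ℝ)+1)) * Qnk q 1 n ≤ (n:ℝ) := by
  have havg := Qnk_one_avg q hq hinf
  have hε : (0:ℝ) < (100 * ((m:ℝ)+1) + 1)⁻¹ := by positivity
  rw [Metric.tendsto_atTop] at havg
  obtain ⟨N, hN⟩ := havg _ hε
  refine ⟨max N 1, fun n hn => ?_⟩
  have hn1 : 1 ≤ n := le_trans (le_max_right _ _) hn
  have hnN : N ≤ n := le_trans (le_max_left _ _) hn
  have := hN n hnN
  rw [Real.dist_eq, sub_zero] at this
  have hnpos : (0:ℝ) < n := by exact_mod_cast hn1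
  have hQnn : 0 ≤ Qnk q 1 n := Qnk_nonneg q hq 1 n
  have habs : (n:ℝ)⁻¹ * Qnk q 1 n < (100 * ((m:ℝ)+1) + 1)⁻¹ := by
    calc (n:ℝ)⁻¹ * Qnk q 1 n ≤ |(n:ℝ)⁻¹ * Qnk q 1 n| := le_abs_self _
    _ < _ := this
  have hc : (0:ℝ) < 100 * ((m:ℝ)+1) + 1 := by positivity
  have key := mul_lt_mul_of_pos_left habs hnpos
  have hid : (n:ℝ) * ((n:ℝ)⁻¹ * Qnk q 1 n) = Qnk q 1 n := by field_simp
  rw [hid] at key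
  have key2 := mul_lt_mul_of_pos_left key hc
  have hid2 : (100 * ((m:ℝ)+1) + 1) * ((n:ℝ) * (100 * ((m:ℝ)+1) + 1)⁻¹) = (n:ℝ) := by
    field_simp
  rw [hid2] at key2
  nlinarith [hQnn]

lemma NNaux_spec (hq : BasicSeq q) (hinf : InfiniteInLimit q) (m : ℕ) :
    ∀ n, NNaux q m ≤ n → (100 * ((m:ℝ)+1)) * Qnk q 1 n ≤ (n:ℝ) := by
  have h := NNaux_exists q hq hinf m
  rw [NNaux, dif_pos h]
  exact h.choose_spec

/-- end positions of the chunks of zeros. -/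
def eS : ℕ → ℕ
  | 0 => 0
  | m+1 => max (NNaux q (m+1)) (100 * (m+1) * (eS m + m + 10))

/-- chunk lengths. -/
def lS (m : ℕ) : ℕ := ⌈(2:ℝ) * Qnk q 1 (eS q m)⌉₊ + m + 1

/-- chunk start positions. -/
def sS (m : ℕ) : ℕ := eS q m + 1 - lS q m

/-- the set of positions where digits are replaced by 0. -/
def SS : Set ℕ := {n | ∃ m, 1 ≤ m ∧ sS q m ≤ n ∧ n ≤ eS q m}

/-- the modified digit sequence. -/
def FF (E : ℕ → ℕ) (n : ℕ) : ℕ := if n ∈ SS q then 0 else E n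

lemma eS_succ_ge (m : ℕ) : 100 * (m+1) * (eS q m + m + 10) ≤ eS q (m+1) :=
  le_max_right _ _

lemma eS_ge_NN (m : ℕ) : NNaux q (m+1) ≤ eS q (m+1) := le_max_left _ _

lemma eS_strictMono : StrictMono (eS q) := by
  apply strictMono_nat_of_lt_succ
  intro m
  have := eS_succ_ge q m
  nlinarith

lemma eS_ge_sq (m : ℕ) : 100 * m * m ≤ eS q m := by
  induction m with
  | zero => simp
  | succ m ih =>
      have := eS_succ_ge q m
      nlinarith

lemma eS_ge_lin (m : ℕ) : 100 * m ≤ eS q m := by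
  have := eS_ge_sq q m
  rcases Nat.eq_zero_or_pos m with h | h
  · simp [h]
  · nlinarith

lemma eS_bound (hq : BasicSeq q) (hinf : InfiniteInLimit q) (m : ℕ) :
    ∀ n, eS q (m+1) ≤ n → (100 * ((m:ℝ)+1+1)) * Qnk q 1 n ≤ (n:ℝ) := by
  intro n hn
  have := NNaux_spec q hq hinf (m+1) n (le_trans (eS_ge_NN q m) hn)
  push_cast at this ⊢
  linarith

lemma lS_ge (m : ℕ) : m + 1 ≤ lS q m := by
  rw [lS]; omega

lemma lS_le_real (hq : BasicSeq q) (m : ℕ) :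
    (lS q m : ℝ) ≤ 2 * Qnk q 1 (eS q m) + m + 2 := by
  rw [lS]
  push_cast
  have h0 : (0:ℝ) ≤ 2 * Qnk q 1 (eS q m) := by
    have := Qnk_nonneg q hq 1 (eS q m); linarith
  have := Nat.ceil_lt_add_one h0
  linarith

lemma lS_ge_real (m : ℕ) : 2 * Qnk q 1 (eS q m) + m + 1 ≤ (lS q m : ℝ) := by
  rw [lS]
  push_cast
  have := Nat.le_ceil ((2:ℝ) * Qnk q 1 (eS q m))
  linarith

/-- chunk `m+1` fits strictly after `eS q m`. -/
lemma chunk_fits (hq : BasicSeq q) (hinf : InfiniteInLimit q) (m : ℕ) :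
    eS q m + lS q (m+1) ≤ eS q (m+1) := by
  have h1 := lS_le_real q hq (m+1)
  push_cast at h1
  have h2 := eS_bound q hq hinf m (eS q (m+1)) le_rfl
  have h3 : (100 * ((m:ℝ)+1) * ((eS q m : ℝ) + m + 10)) ≤ (eS q (m+1) : ℝ) := by
    exact_mod_cast eS_succ_ge q m
  have hm0 : (0:ℝ) ≤ (m:ℝ) := Nat.cast_nonneg m
  have hE0 : (0:ℝ) ≤ (eS q m : ℝ) := Nat.cast_nonneg _
  have hQ : 0 ≤ Qnk q 1 (eS q (m+1)) := Qnk_nonneg q hq 1 _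
  have : (eS q m : ℝ) + (lS q (m+1) : ℝ) ≤ (eS q (m+1) : ℝ) := by nlinarith
  exact_mod_cast this

lemma lS_le_eS (hq : BasicSeq q) (hinf : InfiniteInLimit q) {m : ℕ} (hm : 1 ≤ m) :
    lS q m ≤ eS q m := by
  obtain ⟨m', rfl⟩ := Nat.exists_eq_add_of_le hm
  have := chunk_fits q hq hinf m'
  simp only [add_comm 1 m'] at *
  omega

lemma sS_add (hq : BasicSeq q) (hinf : InfiniteInLimit q) {m : ℕ} (hm : 1 ≤ m) :
    sS q m + lS q m = eS q m + 1 := by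
  have := lS_le_eS q hq hinf hm
  rw [sS]; omega

lemma sS_gt (hq : BasicSeq q) (hinf : InfiniteInLimit q) (m : ℕ) :
    eS q m < sS q (m+1) := by
  have h1 := chunk_fits q hq hinf m
  have h2 := lS_le_eS q hq hinf (Nat.succ_le_succ (Nat.zero_le m))
  rw [sS]; omega

lemma FF_lt (hq : BasicSeq q) (E : ℕ → ℕ) (hE : ∀ n, 1 ≤ n → E n < q n) :
    ∀ n, 1 ≤ n → FF q E n < q n := by
  intro n hn
  rw [FF]
  split
  · have := hq n hn; omega
  · exact hE n hn

lemma FF_chunk_zero (E : ℕ → ℕ) {m n : ℕ} (hm : 1 ≤ m) (h1 : sS q m ≤ n)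
    (h2 : n ≤ eS q m) : FF q E n = 0 := by
  rw [FF, if_pos ⟨m, hm, h1, h2⟩]

/-- telescoping: total length of the first k chunks is at most eS q k. -/
lemma sum_lS_le (hq : BasicSeq q) (hinf : InfiniteInLimit q) (k : ℕ) :
    ∑ i ∈ Finset.Icc 1 k, lS q i ≤ eS q k := by
  induction k with
  | zero => simp
  | succ k ih =>
      rw [Finset.sum_Icc_succ_top (by omega)]
      have := chunk_fits q hq hinf k
      omega

/-- number of modified positions up to `n`. -/
def ZC (n : ℕ) : ℕ := ((Finset.Icc 1 n).filter (fun x => x ∈ SS q)).card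

lemma ZC_nat_bound (hq : BasicSeq q) (hinf : InfiniteInLimit q) (m' n : ℕ)
    (h1 : eS q (m'+1) ≤ n) (h2 : n < eS q (m'+2)) :
    ∃ c : ℕ, ZC q n ≤ eS q m' + lS q (m'+1) + c ∧
      (c = 0 ∨ (c ≤ lS q (m'+2) ∧ sS q (m'+2) ≤ n)) := by
  have hsub : (Finset.Icc 1 n).filter (fun x => x ∈ SS q) ⊆
      (Finset.Icc 1 (m'+2)).biUnion (fun i => Finset.Icc (sS q i) (min (eS q i) n)) := by
    intro x hx
    rw [Finset.mem_filter] at hx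
    obtain ⟨hx1, i, hi1, hsi, hei⟩ := hx
    have hxn : x ≤ n := (Finset.mem_Icc.1 hx1).2
    have him : i ≤ m' + 2 := by
      by_contra hcon
      push_neg at hcon
      have h3 : eS q (m'+2) ≤ eS q (i-1) := by
        apply (eS_strictMono q).monotone
        omega
      have h4 : eS q (i-1) < sS q i := by
        have h5 : eS q (i-1) < sS q ((i-1)+1) := sS_gt q hq hinf (i-1)
        have h6 : (i-1)+1 = i := by omega
        rwa [h6] at h5
      omega
    rw [Finset.mem_biUnion]
    exact ⟨i, Finset.mem_Icc.2 ⟨hi1, him⟩, Finset.mem_Icc.2 ⟨hsi, le_min hei hxn⟩⟩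
  have hcard := le_trans (Finset.card_le_card hsub) Finset.card_biUnion_le
  have hsplit : ∑ i ∈ Finset.Icc 1 (m'+2), (Finset.Icc (sS q i) (min (eS q i) n)).card =
      (∑ i ∈ Finset.Icc 1 (m'+1), (Finset.Icc (sS q i) (min (eS q i) n)).card) +
      (Finset.Icc (sS q (m'+2)) (min (eS q (m'+2)) n)).card :=
    Finset.sum_Icc_succ_top (by omega) _
  -- first part: indices 1..m'+1
  have hstep : ∑ i ∈ Finset.Icc 1 (m'+1), (Finset.Icc (sS q i) (min (eS q i) n)).card ≤
      ∑ i ∈ Finset.Icc 1 (m'+1), lS q i := by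
    apply Finset.sum_le_sum
    intro i hi
    obtain ⟨hi1, him⟩ := Finset.mem_Icc.1 hi
    have hmin : min (eS q i) n = eS q i := by
      apply min_eq_left
      exact le_trans ((eS_strictMono q).monotone him) h1
    rw [hmin, Nat.card_Icc]
    have := sS_add q hq hinf hi1
    omega
  have hstep2 : ∑ i ∈ Finset.Icc 1 (m'+1), lS q i =
      (∑ i ∈ Finset.Icc 1 m', lS q i) + lS q (m'+1) :=
    Finset.sum_Icc_succ_top (by omega) _
  have htel := sum_lS_le q hq hinf m'
  refine ⟨(Finset.Icc (sS q (m'+2)) (min (eS q (m'+2)) n)).card, ?_, ?_⟩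
  · have : ZC q n ≤ ∑ i ∈ Finset.Icc 1 (m'+2),
        (Finset.Icc (sS q i) (min (eS q i) n)).card := hcard
    omega
  by_cases hcase : sS q (m'+2) ≤ n
  · right
    refine ⟨?_, hcase⟩
    rw [Nat.card_Icc]
    have hadd : sS q (m'+2) + lS q (m'+2) = eS q (m'+2) + 1 :=
      sS_add q hq hinf (by omega)
    have hmin_le : min (eS q (m'+2)) n ≤ eS q (m'+2) := min_le_left _ _
    omega
  · left
    push_neg at hcase
    rw [Finset.Icc_eq_empty]
    · simp
    push_neg
    exact lt_of_le_of_lt (min_le_right _ _) hcase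

set_option maxHeartbeats 1000000 in
lemma ZC_core (hq : BasicSeq q) (hinf : InfiniteInLimit q) (m' n : ℕ)
    (h1 : eS q (m'+1) ≤ n) (h2 : n < eS q (m'+2)) :
    (ZC q n : ℝ) * (m' + 1) ≤ (n : ℝ) := by
  obtain ⟨c, hZ, hc⟩ := ZC_nat_bound q hq hinf m' n h1 h2
  have hA : (100 * ((m':ℝ)+1) * ((eS q m' : ℝ) + m' + 10)) ≤ (eS q (m'+1) : ℝ) := by
    exact_mod_cast eS_succ_ge q m'
  have hB1 : (100 * ((m':ℝ)+1+1)) * Qnk q 1 (eS q (m'+1)) ≤ (eS q (m'+1) : ℝ) :=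
    eS_bound q hq hinf m' (eS q (m'+1)) le_rfl
  have hB2 : (100 * ((m':ℝ)+1+1+1)) * Qnk q 1 (eS q (m'+2)) ≤ (eS q (m'+2) : ℝ) := by
    have h := eS_bound q hq hinf (m'+1) (eS q (m'+2)) (le_of_eq rfl)
    push_cast at h ⊢
    linarith
  have hL1 : (lS q (m'+1) : ℝ) ≤ 2 * Qnk q 1 (eS q (m'+1)) + ((m':ℝ)+1) + 2 := by
    have := lS_le_real q hq (m'+1); push_cast at this ⊢; linarith
  have hL2 : (lS q (m'+2) : ℝ) ≤ 2 * Qnk q 1 (eS q (m'+2)) + ((m':ℝ)+2) + 2 := by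
    have := lS_le_real q hq (m'+2); push_cast at this ⊢; linarith
  have hQ1 : 0 ≤ Qnk q 1 (eS q (m'+1)) := Qnk_nonneg q hq 1 _
  have hQ2 : 0 ≤ Qnk q 1 (eS q (m'+2)) := Qnk_nonneg q hq 1 _
  have hE0 : (0:ℝ) ≤ (eS q m' : ℝ) := Nat.cast_nonneg _
  have hmr : (0:ℝ) ≤ (m' : ℝ) := Nat.cast_nonneg _
  have hE1n : (eS q (m'+1) : ℝ) ≤ (n : ℝ) := by exact_mod_cast h1
  have hZr : (ZC q n : ℝ) ≤ (eS q m' : ℝ) + (lS q (m'+1) : ℝ) + (c : ℝ) := by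
    exact_mod_cast hZ
  have hK1 : ((m':ℝ)+1) * (eS q m' : ℝ) * 100 ≤ (eS q (m'+1) : ℝ) := by nlinarith
  have hK2 : ((m':ℝ)+1) * (2 * Qnk q 1 (eS q (m'+1))) * 50 ≤ (eS q (m'+1) : ℝ) := by
    nlinarith
  have hK3 : (((m':ℝ)+1) * ((m':ℝ)+1) + 2 * ((m':ℝ)+1)) * 100 ≤ (eS q (m'+1) : ℝ) := by
    nlinarith
  rcases hc with hc0 | ⟨hcl, hcs⟩
  · subst hc0
    push_cast at hZr
    nlinarith
  · have hclr : (c : ℝ) ≤ (lS q (m'+2) : ℝ) := by exact_mod_cast hcl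
    have hE2nat : eS q (m'+2) ≤ n + lS q (m'+2) := by
      have hadd : sS q (m'+2) + lS q (m'+2) = eS q (m'+2) + 1 :=
        sS_add q hq hinf (by omega)
      omega
    have hE2n : (eS q (m'+2) : ℝ) ≤ (n : ℝ) + (lS q (m'+2) : ℝ) := by
      exact_mod_cast hE2nat
    have hm1 : (0:ℝ) ≤ (m':ℝ) + 1 := by linarith
    have hQm2 : 0 ≤ (m':ℝ) * Qnk q 1 (eS q (m'+2)) := mul_nonneg hmr hQ2
    have h300 : 300 * Qnk q 1 (eS q (m'+2)) ≤ (eS q (m'+2) : ℝ) := by linarith [hQm2, hB2]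
    have hL2b : 149 * (lS q (m'+2) : ℝ) ≤ (n:ℝ) + 150 * ((m':ℝ) + 4) := by linarith
    have hK4 : ((m':ℝ)+1) * (2 * Qnk q 1 (eS q (m'+2))) * 50 ≤ (n:ℝ) + (lS q (m'+2) : ℝ) := by
      nlinarith [hB2, hQ2, hE2n, hQm2]
    have hlin : 100 * ((m':ℝ)+1) ≤ (eS q (m'+1) : ℝ) := by
      have := eS_ge_lin q (m'+1)
      have h' : ((100 * (m'+1) : ℕ) : ℝ) ≤ (eS q (m'+1) : ℝ) := by exact_mod_cast this
      push_cast at h'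
      linarith
    have hmulZ := mul_le_mul_of_nonneg_left hZr hm1
    have hmulL1 := mul_le_mul_of_nonneg_left hL1 hm1
    have hmulL2 := mul_le_mul_of_nonneg_left hL2 hm1
    have hmulc := mul_le_mul_of_nonneg_left hclr hm1
    linarith [hmulZ, hmulL1, hmulL2, hmulc, hK1, hK2, hK3, hK4, hlin, hL2b, hE1n, hE0, hmr,
      mul_nonneg hmr (Nat.cast_nonneg (lS q (m'+2))), mul_nonneg hmr (Nat.cast_nonneg (ZC q n))]

lemma ZC_le (hq : BasicSeq q) (hinf : InfiniteInLimit q) {m n : ℕ} (hm : 1 ≤ m)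
    (hn : eS q m ≤ n) : (ZC q n : ℝ) * m ≤ (n : ℝ) := by
  have hlin := eS_ge_lin q m
  have hmn : m ≤ n := by omega
  have hPm : eS q m ≤ n := hn
  set M := Nat.findGreatest (fun i => eS q i ≤ n) n with hMdef
  have hMge : m ≤ M := Nat.le_findGreatest (P := fun i => eS q i ≤ n) hmn hPm
  have hMspec : eS q M ≤ n := Nat.findGreatest_spec (P := fun i => eS q i ≤ n) hmn hPm
  have hMsucc : ¬ eS q (M+1) ≤ n := by
    intro hcon
    have hlin2 := eS_ge_lin q (M+1)
    have h1 : M + 1 ≤ n := by omega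
    have := Nat.le_findGreatest (P := fun i => eS q i ≤ n) h1 hcon
    omega
  obtain ⟨m'', hMeq⟩ : ∃ m'', M = m'' + 1 := ⟨M - 1, by omega⟩
  push_neg at hMsucc
  have h2 : n < eS q (m''+2) := by
    have : M + 1 = m'' + 2 := by omega
    rwa [this] at hMsucc
  have hcore := ZC_core q hq hinf m'' n (by rwa [hMeq] at hMspec) h2
  have hmM : (m:ℝ) ≤ (m'':ℝ) + 1 := by
    have : (m:ℝ) ≤ (M:ℝ) := by exact_mod_cast hMge
    rw [hMeq] at this
    push_cast at this
    linarith
  have hZ0 : (0:ℝ) ≤ (ZC q n : ℝ) := Nat.cast_nonneg _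
  nlinarith

lemma density_SS (hq : BasicSeq q) (hinf : InfiniteInLimit q) :
    Filter.Tendsto (fun N : ℕ => ((ZC q N : ℝ)) / N) Filter.atTop (nhds 0) := by
  rw [Metric.tendsto_atTop]
  intro ε hε
  obtain ⟨m0, hm0⟩ := exists_nat_one_div_lt hε
  refine ⟨eS q (m0+1), fun N hN => ?_⟩
  have hlin := eS_ge_lin q (m0+1)
  have hNpos : 0 < N := by omega
  have hNr : (0:ℝ) < N := by exact_mod_cast hNpos
  have hkey := ZC_le q hq hinf (by omega : 1 ≤ m0+1) hN
  have hm0r : (0:ℝ) < (m0:ℝ) + 1 := by positivity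
  rw [Real.dist_eq, sub_zero]
  have hZ0 : (0:ℝ) ≤ (ZC q N : ℝ) := Nat.cast_nonneg _
  have habs : |(ZC q N : ℝ) / N| = (ZC q N : ℝ) / N := by
    rw [abs_of_nonneg]; positivity
  rw [habs]
  have h1 : (ZC q N : ℝ) / N ≤ 1 / ((m0:ℝ)+1) := by
    rw [div_le_div_iff₀ hNr hm0r]
    push_cast at hkey ⊢
    linarith
  linarith

lemma getD_replicate_zero (j t : ℕ) : (List.replicate j (0:ℕ)).getD t 0 = 0 := by
  induction j generalizing t with
  | zero => simp [List.getD]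
  | succ j ih =>
      cases t with
      | zero => simp [List.replicate]
      | succ t => simpa [List.replicate] using ih t

lemma count_ge (hq : BasicSeq q) (hinf : InfiniteInLimit q) (E : ℕ → ℕ) {j m : ℕ}
    (hj : 1 ≤ j) (hjm : j ≤ m) :
    lS q m + 1 - j ≤ blockCount (FF q E) (List.replicate j 0) (eS q m) := by
  have hm1 : 1 ≤ m := le_trans hj hjm
  have hle := lS_le_eS q hq hinf hm1
  have hadd := sS_add q hq hinf hm1
  have hlm := lS_ge q m
  rw [blockCount, List.length_replicate]
  have hsub : Finset.Icc (sS q m) (eS q m + 1 - j) ⊆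
      (Finset.Icc 1 (eS q m + 1 - j)).filter
        (fun i => ∀ t, t < j → FF q E (i+t) = (List.replicate j (0:ℕ)).getD t 0) := by
    intro i hi
    obtain ⟨hi1, hi2⟩ := Finset.mem_Icc.1 hi
    rw [Finset.mem_filter, Finset.mem_Icc]
    have hs1 : 1 ≤ sS q m := by rw [sS]; omega
    refine ⟨⟨le_trans hs1 hi1, hi2⟩, fun t ht => ?_⟩
    rw [getD_replicate_zero]
    apply FF_chunk_zero q E hm1 (le_trans hi1 (Nat.le_add_right i t))
    omega
  have hcard := Finset.card_le_card hsub
  rw [Nat.card_Icc] at hcard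
  omega

lemma not_normal (hq : BasicSeq q) (hinf : InfiniteInLimit q) (E : ℕ → ℕ) {j : ℕ}
    (hj : 1 ≤ j) : ¬ QNormalOfOrder q (FF q E) j := by
  intro h
  have h0 := h (List.replicate j 0) (by simp)
  have h2 : ∀ᶠ n in Filter.atTop,
      (blockCount (FF q E) (List.replicate j 0) n : ℝ) / Qnk q j n < 2 :=
    h0.eventually_lt_const (by norm_num)
  rw [Filter.eventually_atTop] at h2
  obtain ⟨N, hN⟩ := h2
  set m := max (max j N) 1 with hmdef
  have hm1 : 1 ≤ m := le_max_right _ _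
  have hjm : j ≤ m := le_trans (le_max_left j N) (le_max_left _ _)
  have hNm' : N ≤ m := le_trans (le_max_right j N) (le_max_left _ _)
  have hlin := eS_ge_lin q m
  have hNm : N ≤ eS q m := by omega
  have hcount := count_ge q hq hinf E hj hjm
  have hem1 : 1 ≤ eS q m := by omega
  have hQj : 0 < Qnk q j (eS q m) := Qnk_pos q hq j hem1
  have hQle : Qnk q j (eS q m) ≤ Qnk q 1 (eS q m) := Qnk_le_Qnk_one q hq hj _
  have hlge := lS_ge_real q m
  have hQ1nn : 0 ≤ Qnk q 1 (eS q m) := Qnk_nonneg q hq 1 _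
  have hcastc : ((lS q m + 1 - j : ℕ) : ℝ) = (lS q m : ℝ) + 1 - j := by
    have := lS_ge q m
    have hj' : j ≤ lS q m + 1 := by omega
    push_cast [Nat.cast_sub hj']
    ring
  have hcr : ((lS q m + 1 - j : ℕ) : ℝ) ≤
      (blockCount (FF q E) (List.replicate j 0) (eS q m) : ℝ) := by exact_mod_cast hcount
  have hjr : (j:ℝ) ≤ (m:ℝ) := by exact_mod_cast hjm
  have hge2 : 2 ≤ (blockCount (FF q E) (List.replicate j 0) (eS q m) : ℝ) /
      Qnk q j (eS q m) := by
    rw [le_div_iff₀ hQj]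
    rw [hcastc] at hcr
    linarith
  have := hN (eS q m) hNm
  linarith

/-- the comparison series. -/
def gg (n : ℕ) : ℝ := ((q (n+1) : ℝ) - 1) / (cantorProd q (n+1) : ℝ)

lemma cantorProd_zero : cantorProd q 0 = 1 := by simp [cantorProd]

lemma cantorProd_succ (n : ℕ) : cantorProd q (n+1) = cantorProd q n * q (n+1) :=
  Finset.prod_Icc_succ_top (by omega) _

lemma cantorProd_pos (hq : BasicSeq q) (n : ℕ) : 0 < cantorProd q n :=
  Finset.prod_pos (fun i hi => by have := hq i (Finset.mem_Icc.1 hi).1; omega)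

lemma cantorProd_pos_real (hq : BasicSeq q) (n : ℕ) : (0:ℝ) < (cantorProd q n : ℝ) := by
  exact_mod_cast cantorProd_pos q hq n

lemma gg_nonneg (hq : BasicSeq q) (n : ℕ) : 0 ≤ gg q n := by
  rw [gg]
  have h1 := qR_ge q hq (show 1 ≤ n+1 by omega)
  have h2 := cantorProd_pos_real q hq (n+1)
  exact div_nonneg (by linarith) (le_of_lt h2)

lemma sum_gg (hq : BasicSeq q) (N : ℕ) :
    ∑ i ∈ Finset.range N, gg q i = 1 - 1 / (cantorProd q N : ℝ) := by
  induction N with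
  | zero => simp [cantorProd_zero]
  | succ N ih =>
      rw [Finset.sum_range_succ, ih, gg, cantorProd_succ]
      have hP := cantorProd_pos_real q hq N
      have hq2 := qR_ge q hq (show 1 ≤ N+1 by omega)
      have hqpos : (0:ℝ) < (q (N+1) : ℝ) := by linarith
      push_cast
      field_simp
      ring

lemma sum_gg_le (hq : BasicSeq q) (N : ℕ) : ∑ i ∈ Finset.range N, gg q i ≤ 1 := by
  rw [sum_gg q hq]
  have hP := cantorProd_pos_real q hq N
  have h2 : 0 < 1 / (cantorProd q N : ℝ) := one_div_pos.2 hP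
  linarith

lemma gg_summable (hq : BasicSeq q) : Summable (gg q) :=
  summable_of_sum_range_le (gg_nonneg q hq) (sum_gg_le q hq)

lemma gg_tsum_le (hq : BasicSeq q) : ∑' n, gg q n ≤ 1 :=
  Summable.tsum_le_of_sum_range_le (gg_summable q hq) (sum_gg_le q hq)

/-- the digit series of the modified number. -/
def ffd (E : ℕ → ℕ) (n : ℕ) : ℝ := (FF q E (n+1) : ℝ) / (cantorProd q (n+1) : ℝ)

lemma ffd_nonneg (hq : BasicSeq q) (E : ℕ → ℕ) (n : ℕ) : 0 ≤ ffd q E n := by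
  rw [ffd]
  have := cantorProd_pos_real q hq (n+1)
  positivity

lemma ffd_le_gg (hq : BasicSeq q) (E : ℕ → ℕ) (hE : ∀ n, 1 ≤ n → E n < q n) (n : ℕ) :
    ffd q E n ≤ gg q n := by
  rw [ffd, gg]
  have hP := cantorProd_pos_real q hq (n+1)
  have hFF := FF_lt q hq E hE (n+1) (by omega)
  have hnum : (FF q E (n+1) : ℝ) ≤ (q (n+1) : ℝ) - 1 := by
    have : FF q E (n+1) + 1 ≤ q (n+1) := hFF
    have := (Nat.cast_le (α := ℝ)).2 this
    push_cast at this
    linarith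
  exact div_le_div_of_nonneg_right hnum (le_of_lt hP)

lemma ffd_summable (hq : BasicSeq q) (E : ℕ → ℕ) (hE : ∀ n, 1 ≤ n → E n < q n) :
    Summable (ffd q E) :=
  Summable.of_nonneg_of_le (ffd_nonneg q hq E) (ffd_le_gg q hq E hE) (gg_summable q hq)

lemma y_lt_one (hq : BasicSeq q) (hinf : InfiniteInLimit q) (E : ℕ → ℕ)
    (hE : ∀ n, 1 ≤ n → E n < q n) : ∑' n, ffd q E n < 1 := by
  have hle1 := lS_le_eS q hq hinf (le_refl 1)
  have hl1 := lS_ge q 1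
  have hn1 : 1 ≤ sS q 1 := by rw [sS]; omega
  have hn2 : sS q 1 ≤ eS q 1 := by rw [sS]; omega
  have hFF : FF q E (sS q 1) = 0 := FF_chunk_zero q E le_rfl le_rfl hn2
  have hkey : ffd q E (sS q 1 - 1) < gg q (sS q 1 - 1) := by
    have hidx : sS q 1 - 1 + 1 = sS q 1 := by omega
    rw [ffd, gg, hidx, hFF]
    have hP := cantorProd_pos_real q hq (sS q 1)
    have hq2 := qR_ge q hq hn1
    rw [Nat.cast_zero, zero_div]
    apply div_pos (by linarith) hP
  calc ∑' n, ffd q E n < ∑' n, gg q n :=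
        Summable.tsum_lt_tsum (ffd_le_gg q hq E hE) hkey (ffd_summable q hq E hE) (gg_summable q hq)
  _ ≤ 1 := gg_tsum_le q hq

lemma FF_ne_infinite (hq : BasicSeq q) (hinf : InfiniteInLimit q) (E : ℕ → ℕ) :
    {n | 1 ≤ n ∧ FF q E n ≠ q n - 1}.Infinite := by
  apply Set.infinite_of_injective_forall_mem (f := fun m : ℕ => eS q (m+1))
  · intro a b hab
    have := (eS_strictMono q).injective hab
    omega
  · intro m
    have hlin := eS_ge_lin q (m+1)
    have hm1 : (1:ℕ) ≤ m+1 := by omega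
    have hle := lS_le_eS q hq hinf hm1
    have hlg := lS_ge q (m+1)
    have hs : sS q (m+1) ≤ eS q (m+1) := by rw [sS]; omega
    have hFF : FF q E (eS q (m+1)) = 0 := FF_chunk_zero q E hm1 hs le_rfl
    have hq2 := hq (eS q (m+1)) (by omega)
    refine ⟨by omega, ?_⟩
    rw [hFF]
    omega

lemma density_diff (hq : BasicSeq q) (hinf : InfiniteInLimit q) (E : ℕ → ℕ) :
    DensityZero {n | 1 ≤ n ∧ E n ≠ FF q E n} := by
  rw [DensityZero]
  refine tendsto_of_tendsto_of_tendsto_of_le_of_le (g := fun _ : ℕ => (0:ℝ))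
    (h := fun N : ℕ => (ZC q N : ℝ) / N) tendsto_const_nhds (density_SS q hq hinf) ?_ ?_
  · rw [Pi.le_def]
    intro N
    positivity
  · rw [Pi.le_def]
    intro N
    have hNnn : (0:ℝ) ≤ (N:ℝ) := Nat.cast_nonneg N
    rw [ZC]
    apply div_le_div_of_nonneg_right ?_ hNnn
    apply Nat.cast_le.2
    apply card_filter_mono
    intro x _ hx2
    rw [Set.mem_setOf_eq] at hx2
    by_contra hS
    rw [FF, if_neg hS] at hx2
    exact hx2.2 rfl

end Stmt0Aux

/-- if `Q` is infinite in limit and `x` is `Q`-normal of order `k`, then there is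
a `y` whose digits differ from those of `x` on a set of density zero and which is not
`Q`-normal of any order. -/
theorem stmt_0 (k : ℕ) (hk : 1 ≤ k) (q : ℕ → ℕ) (hq : BasicSeq q)
    (hinf : InfiniteInLimit q) (x : ℝ) (E : ℕ → ℕ) (hE : IsCantorDigits q E x)
    (hnorm : QNormalOfOrder q E k) :
    ∃ (y : ℝ) (F : ℕ → ℕ), IsCantorDigits q F y ∧
      DensityZero {n | 1 ≤ n ∧ E n ≠ F n} ∧
      ∀ j, 1 ≤ j → ¬ QNormalOfOrder q F j := by
  obtain ⟨hE1, hE2, hE3⟩ := hE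
  refine ⟨∑' n : ℕ, Stmt0Aux.ffd q E n, Stmt0Aux.FF q E, ⟨?_, ?_, ?_⟩, ?_, ?_⟩
  · exact Stmt0Aux.FF_lt q hq E hE1
  · exact Stmt0Aux.FF_ne_infinite q hq hinf E
  · have h0 : 0 ≤ ∑' n, Stmt0Aux.ffd q E n := tsum_nonneg (Stmt0Aux.ffd_nonneg q hq E)
    have h1 := Stmt0Aux.y_lt_one q hq hinf E hE1
    have hfl : ⌊∑' n, Stmt0Aux.ffd q E n⌋ = 0 := Int.floor_eq_zero_iff.2 ⟨h0, h1⟩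
    rw [hfl]
    push_cast
    rw [zero_add]
    rfl
  · exact Stmt0Aux.density_diff q hq hinf E
  · intro j hj
    exact Stmt0Aux.not_normal q hq hinf E hj
end
end

section
/- Let Q = (q_n) be a basic sequence and suppose x = E_0.E_1E_2… w.r.t. Q is Q-distribution normal. If y = F_0.F_1F_2… w.r.t. Q satisfies lim_{N→∞} (1/N) ∑_{n=1}^N (|E_n − F_n| + 1)/q_n = 0, then y is Q-distribution normal. -/
open Filter Finset MeasureTheory

noncomputable section
open scoped Classical

section Stmt1Aux

lemma cantorProd_succ (q : ℕ → ℕ) (n : ℕ) :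
    cantorProd q (n + 1) = cantorProd q n * q (n + 1) := by
  unfold cantorProd
  rw [Finset.prod_Icc_succ_top (Nat.le_add_left 1 n)]

lemma one_le_cantorProd {q : ℕ → ℕ} (hq : BasicSeq q) (n : ℕ) : 1 ≤ cantorProd q n := by
  refine Finset.one_le_prod' fun j hj => ?_
  have := hq j (Finset.mem_Icc.mp hj).1; omega

lemma cantorProd_pos {q : ℕ → ℕ} (hq : BasicSeq q) (n : ℕ) : (0:ℝ) < cantorProd q n := by
  exact_mod_cast Nat.lt_of_lt_of_le Nat.zero_lt_one (one_le_cantorProd hq n)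

lemma two_pow_le_cantorProd {q : ℕ → ℕ} (hq : BasicSeq q) (n : ℕ) :
    2 ^ n ≤ cantorProd q n := by
  induction n with
  | zero => simp [cantorProd]
  | succ n ih =>
    rw [cantorProd_succ, pow_succ]
    exact Nat.mul_le_mul ih (hq (n+1) (Nat.le_add_left 1 n))

lemma cantorProd_dvd {q : ℕ → ℕ} {m n : ℕ} (h : m ≤ n) :
    cantorProd q m ∣ cantorProd q n :=
  Finset.prod_dvd_prod_of_subset _ _ _ (Finset.Icc_subset_Icc_right h)

lemma inv_cantorProd_sub {q : ℕ → ℕ} (hq : BasicSeq q) (m : ℕ) :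
    ((q (m+1) : ℝ) - 1) / cantorProd q (m+1) = 1 / cantorProd q m - 1 / cantorProd q (m+1) := by
  have hm := cantorProd_pos hq m
  have hm1 := cantorProd_pos hq (m+1)
  have hqm : (2:ℝ) ≤ q (m+1) := by exact_mod_cast hq (m+1) (Nat.le_add_left 1 m)
  rw [cantorProd_succ]
  push_cast
  field_simp

lemma inv_cantorProd_le_geom {q : ℕ → ℕ} (hq : BasicSeq q) (m : ℕ) :
    (1:ℝ) / cantorProd q m ≤ (1/2) ^ m := by
  rw [one_div, div_pow, one_pow, one_div]
  refine inv_anti₀ (by positivity) ?_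
  exact_mod_cast two_pow_le_cantorProd hq m

lemma summable_of_le_digitBound {q : ℕ → ℕ} (hq : BasicSeq q) {f : ℕ → ℝ}
    (hf0 : ∀ m, 0 ≤ f m)
    (hf : ∀ m, f m ≤ ((q (m+1) : ℝ) - 1) / cantorProd q (m+1)) :
    Summable f := by
  refine Summable.of_nonneg_of_le hf0 (fun m => ?_) (summable_geometric_of_lt_one (by norm_num) (by norm_num) : Summable fun m => ((1:ℝ)/2)^m)
  refine (hf m).trans ?_
  rw [inv_cantorProd_sub hq m]
  have h1 : (0:ℝ) ≤ 1 / cantorProd q (m+1) := by positivity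
  linarith [inv_cantorProd_le_geom hq m]

lemma tsum_tail_le {q : ℕ → ℕ} (hq : BasicSeq q) {f : ℕ → ℝ}
    (hf0 : ∀ m, 0 ≤ f m)
    (hf : ∀ m, f m ≤ ((q (m+1) : ℝ) - 1) / cantorProd q (m+1)) (k : ℕ) :
    ∑' m, f (k + m) ≤ 1 / cantorProd q k := by
  have hsum : Summable f := summable_of_le_digitBound hq hf0 hf
  have key : ∀ M : ℕ, ∑ m ∈ Finset.range M, f (k + m) ≤ 1 / cantorProd q k := by
    intro M
    have : ∑ m ∈ Finset.range M, f (k + m)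
        ≤ ∑ m ∈ Finset.range M, (1 / (cantorProd q (k+m) :ℝ) - 1 / cantorProd q (k+m+1)) := by
      refine Finset.sum_le_sum fun m _ => ?_
      rw [← inv_cantorProd_sub hq (k+m)]
      exact hf (k + m)
    refine this.trans ?_
    have htel := Finset.sum_range_sub' (fun m => 1 / (cantorProd q (k+m) :ℝ)) M
    simp only [Nat.add_zero] at htel
    have heq : ∑ m ∈ Finset.range M, (1 / (cantorProd q (k+m) :ℝ) - 1 / (cantorProd q (k+m+1) :ℝ))
        = ∑ i ∈ Finset.range M, (1 / (cantorProd q (k+i) :ℝ) - 1 / (cantorProd q (k+(i+1)) :ℝ)) := by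
      refine Finset.sum_congr rfl fun i _ => by rw [Nat.add_assoc]
    rw [heq, htel]
    have : (0:ℝ) ≤ 1 / cantorProd q (k+M) := by positivity
    linarith
  have hsum' : Summable fun m => f (k + m) := by
    have := (summable_nat_add_iff k).2 hsum
    simpa [add_comm] using this
  exact hsum'.tsum_le_of_sum_range_le key

-- digit bound instantiation
lemma digit_le_bound {q E : ℕ → ℕ} (hq : BasicSeq q) (hEq : ∀ n, 1 ≤ n → E n < q n) (m : ℕ) :
    (E (m+1) : ℝ) / cantorProd q (m+1) ≤ ((q (m+1) : ℝ) - 1) / cantorProd q (m+1) := by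
  have h := hEq (m+1) (Nat.le_add_left 1 m)
  have : (E (m+1) : ℝ) ≤ (q (m+1) : ℝ) - 1 := by
    have : (E (m+1) : ℝ) + 1 ≤ (q (m+1) : ℝ) := by exact_mod_cast h
    linarith
  have hp := cantorProd_pos hq (m+1)
  gcongr

lemma summable_digit {q E : ℕ → ℕ} (hq : BasicSeq q) (hEq : ∀ n, 1 ≤ n → E n < q n) :
    Summable (fun m => (E (m+1) : ℝ) / cantorProd q (m+1)) :=
  summable_of_le_digitBound hq (fun m => by positivity) (digit_le_bound hq hEq)

-- integer part lemma
lemma prodmul_eq_int_add_tail {q E : ℕ → ℕ} {x : ℝ} (hq : BasicSeq q)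
    (hE : IsCantorDigits q E x) (n : ℕ) :
    ∃ j : ℤ, (cantorProd q n : ℝ) * x
      = j + (cantorProd q n : ℝ) * ∑' m, (E (m + n + 1) : ℝ) / cantorProd q (m + n + 1) := by
  obtain ⟨hEq, -, hx⟩ := hE
  have hsum := summable_digit hq hEq
  have hsplit := (hsum.sum_add_tsum_nat_add (f := fun m => (E (m+1) : ℝ) / cantorProd q (m+1)) n).symm
  refine ⟨(cantorProd q n : ℤ) * ⌊x⌋
    + ((∑ m ∈ Finset.range n, (cantorProd q n / cantorProd q (m+1)) * E (m+1) : ℕ) : ℤ), ?_⟩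
  have hterm : ∀ m ∈ Finset.range n,
      (cantorProd q n : ℝ) * ((E (m+1) : ℝ) / cantorProd q (m+1))
        = ((cantorProd q n / cantorProd q (m+1) : ℕ) : ℝ) * E (m+1) := by
    intro m hm
    have hd : cantorProd q (m+1) ∣ cantorProd q n :=
      cantorProd_dvd (Nat.succ_le_of_lt (Finset.mem_range.mp hm))
    have hcast : ((cantorProd q n / cantorProd q (m+1) : ℕ) : ℝ)
        = (cantorProd q n : ℝ) / (cantorProd q (m+1) : ℝ) := by
      rw [Nat.cast_div hd (ne_of_gt (cantorProd_pos hq (m+1)))]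
    rw [hcast]; ring
  calc (cantorProd q n : ℝ) * x
      = (cantorProd q n : ℝ) * ((⌊x⌋ : ℝ) + ∑' m, (E (m+1) : ℝ) / cantorProd q (m+1)) := by
        rw [← hx]
    _ = (cantorProd q n : ℝ) * (⌊x⌋ : ℝ)
        + ∑ m ∈ Finset.range n, (cantorProd q n : ℝ) * ((E (m+1) : ℝ) / cantorProd q (m+1))
        + (cantorProd q n : ℝ) * ∑' m, (E (m + n + 1) : ℝ) / cantorProd q (m + n + 1) := by
        rw [hsplit]; rw [mul_add, mul_add, Finset.mul_sum]; ring
    _ = _ := by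
        rw [Finset.sum_congr rfl hterm]
        have : ((((cantorProd q n : ℤ) * ⌊x⌋
            + ((∑ m ∈ Finset.range n, (cantorProd q n / cantorProd q (m+1)) * E (m+1) : ℕ) : ℤ)) : ℤ) : ℝ)
            = (cantorProd q n : ℝ) * (⌊x⌋ : ℝ)
              + ∑ m ∈ Finset.range n,
                  ((cantorProd q n / cantorProd q (m+1) : ℕ) : ℝ) * (E (m+1) : ℝ) := by
          rw [Int.cast_add, Int.cast_mul, Int.cast_natCast, Int.cast_natCast, Nat.cast_sum]
          simp only [Nat.cast_mul]
        rw [this]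

lemma diff_abs_le_bound {q E F : ℕ → ℕ} (hq : BasicSeq q)
    (hEq : ∀ n, 1 ≤ n → E n < q n) (hFq : ∀ n, 1 ≤ n → F n < q n) (m : ℕ) :
    |(F (m+1) : ℝ) - (E (m+1) : ℝ)| / cantorProd q (m+1)
      ≤ ((q (m+1) : ℝ) - 1) / cantorProd q (m+1) := by
  have hp := cantorProd_pos hq (m+1)
  have h1 : (E (m+1) : ℝ) + 1 ≤ (q (m+1) : ℝ) := by exact_mod_cast hEq (m+1) (Nat.le_add_left 1 m)
  have h2 : (F (m+1) : ℝ) + 1 ≤ (q (m+1) : ℝ) := by exact_mod_cast hFq (m+1) (Nat.le_add_left 1 m)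
  have h3 : (0:ℝ) ≤ E (m+1) := Nat.cast_nonneg _
  have h4 : (0:ℝ) ≤ F (m+1) := Nat.cast_nonneg _
  have : |(F (m+1) : ℝ) - (E (m+1) : ℝ)| ≤ (q (m+1) : ℝ) - 1 := by
    rw [abs_le]; constructor <;> linarith
  gcongr

lemma key_rel {q E F : ℕ → ℕ} {x y : ℝ} (hq : BasicSeq q)
    (hE : IsCantorDigits q E x) (hF : IsCantorDigits q F y) (n : ℕ) :
    ∃ r : ℝ, (∃ j : ℤ, Int.fract ((cantorProd q n : ℝ) * y)
        - Int.fract ((cantorProd q n : ℝ) * x) - r = j) ∧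
      |r| ≤ (|(E (n+1) : ℝ) - (F (n+1) : ℝ)| + 1) / (q (n+1) : ℝ) := by
  obtain ⟨jE, hjE⟩ := prodmul_eq_int_add_tail hq hE n
  obtain ⟨jF, hjF⟩ := prodmul_eq_int_add_tail hq hF n
  set P : ℝ := (cantorProd q n : ℝ) with hP
  set tE : ℝ := ∑' m, (E (m + n + 1) : ℝ) / cantorProd q (m + n + 1) with htE
  set tF : ℝ := ∑' m, (F (m + n + 1) : ℝ) / cantorProd q (m + n + 1) with htF
  refine ⟨P * (tF - tE), ⟨jF - jE - ⌊P * y⌋ + ⌊P * x⌋, ?_⟩, ?_⟩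
  · have h1 : Int.fract (P * y) = P * y - ⌊P * y⌋ := (Int.self_sub_floor (P * y)).symm
    have h2 : Int.fract (P * x) = P * x - ⌊P * x⌋ := (Int.self_sub_floor (P * x)).symm
    rw [h1, h2]
    push_cast
    linarith [hjE, hjF]
  · set g : ℕ → ℝ := fun m => |(F (m+1) : ℝ) - (E (m+1) : ℝ)| / cantorProd q (m+1) with hg
    have hg0 : ∀ m, 0 ≤ g m := fun m => by positivity
    have hgb : ∀ m, g m ≤ ((q (m+1) : ℝ) - 1) / cantorProd q (m+1) :=
      fun m => diff_abs_le_bound hq hE.1 hF.1 m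
    have hsg : Summable g := summable_of_le_digitBound hq hg0 hgb
    have hsD : Summable (fun m => g (m + n)) := (summable_nat_add_iff (f := g) n).2 hsg
    have hsE' : Summable (fun m => (E (m + n + 1) : ℝ) / cantorProd q (m + n + 1)) :=
      (summable_nat_add_iff (f := fun m => (E (m + 1) : ℝ) / cantorProd q (m + 1)) n).2 (summable_digit hq hE.1)
    have hsF' : Summable (fun m => (F (m + n + 1) : ℝ) / cantorProd q (m + n + 1)) :=
      (summable_nat_add_iff (f := fun m => (F (m + 1) : ℝ) / cantorProd q (m + 1)) n).2 (summable_digit hq hF.1)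
    have hsub : tF - tE = ∑' m, ((F (m + n + 1) : ℝ) / cantorProd q (m + n + 1)
        - (E (m + n + 1) : ℝ) / cantorProd q (m + n + 1)) := (Summable.tsum_sub hsF' hsE').symm
    have habs1 : ∀ m, |(F (m + n + 1) : ℝ) / cantorProd q (m + n + 1)
        - (E (m + n + 1) : ℝ) / cantorProd q (m + n + 1)| = g (m + n) := by
      intro m
      have hp := cantorProd_pos hq (m + n + 1)
      rw [div_sub_div_same, abs_div, abs_of_pos hp]
    have habs : |tF - tE| ≤ ∑' m, g (m + n) := by
      rw [hsub]
      have hnorm := norm_tsum_le_tsum_norm (f := fun m => (F (m + n + 1) : ℝ) / cantorProd q (m + n + 1)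
          - (E (m + n + 1) : ℝ) / cantorProd q (m + n + 1)) ?_
      · rw [Real.norm_eq_abs] at hnorm
        refine hnorm.trans (le_of_eq ?_)
        refine tsum_congr fun m => ?_
        rw [Real.norm_eq_abs, habs1]
      · refine Summable.congr hsD fun m => ?_
        rw [Real.norm_eq_abs, habs1]
    have hsplit : ∑' m, g (m + n) = g n + ∑' m, g (m + 1 + n) := by
      rw [Summable.tsum_eq_zero_add hsD]
      norm_num
    have htail : ∑' m, g (m + 1 + n) ≤ 1 / cantorProd q (n + 1) := by
      have hcong : ∑' m, g (m + 1 + n) = ∑' m, g ((n + 1) + m) :=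
        tsum_congr fun m => congrArg g (by omega)
      rw [hcong]
      exact tsum_tail_le hq hg0 hgb (n + 1)
    have hD0 : g n = |(E (n+1) : ℝ) - (F (n+1) : ℝ)| / cantorProd q (n + 1) := by
      rw [hg]; simp only [abs_sub_comm]
    have hPpos : (0:ℝ) < P := cantorProd_pos hq n
    have hqpos : (0:ℝ) < q (n+1) := by
      have := hq (n+1) (Nat.le_add_left 1 n)
      have : (2:ℝ) ≤ q (n+1) := by exact_mod_cast this
      linarith
    have hPn1 : (cantorProd q (n+1) : ℝ) = P * q (n+1) := by
      rw [cantorProd_succ]; push_cast; rfl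
    have h5 : |tF - tE| ≤ (|(E (n+1) : ℝ) - (F (n+1) : ℝ)| + 1) / cantorProd q (n + 1) := by
      have := habs.trans_eq hsplit
      have h6 : g n + ∑' m, g (m + 1 + n) ≤ |(E (n+1) : ℝ) - (F (n+1) : ℝ)| / cantorProd q (n + 1)
          + 1 / cantorProd q (n + 1) := add_le_add (le_of_eq hD0) htail
      rw [← add_div] at h6
      linarith
    rw [abs_mul, abs_of_pos hPpos]
    rw [hPn1] at h5
    calc P * |tF - tE| ≤ P * ((|(E (n+1) : ℝ) - (F (n+1) : ℝ)| + 1) / (P * q (n+1))) := by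
          exact mul_le_mul_of_nonneg_left h5 hPpos.le
      _ = (|(E (n+1) : ℝ) - (F (n+1) : ℝ)| + 1) / (q (n+1) : ℝ) := by
          field_simp

lemma close_mem {u v r : ℝ} {c d ε : ℝ} (hc : 0 ≤ c) (hd : d ≤ 1)
    (hv0 : 0 ≤ v) (hv1 : v < 1) (hj : ∃ j : ℤ, v - u - r = j)
    (hr : |r| ≤ ε) (hu1 : c + ε ≤ u) (hu2 : u < d - ε) : v ∈ Set.Ico c d := by
  obtain ⟨j, hj⟩ := hj
  have hr1 : -ε ≤ r := (abs_le.mp hr).1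
  have hr2 : r ≤ ε := (abs_le.mp hr).2
  have h1 : c ≤ u + r := by linarith
  have h2 : u + r < d := by linarith
  have hj0 : j = 0 := by
    have hlt : (j : ℝ) < 1 := by linarith
    have hgt : (-1 : ℝ) < j := by linarith
    have : j < 1 := by exact_mod_cast hlt
    have : (-1 : ℤ) < j := by exact_mod_cast hgt
    omega
  rw [hj0] at hj
  have : v = u + r := by push_cast at hj; linarith
  exact ⟨by linarith, by linarith⟩

lemma elb {u v r : ℕ → ℝ}
    (hu : UDMod1 u) (hu01 : ∀ n, u n ∈ Set.Ico (0:ℝ) 1) (hv01 : ∀ n, v n ∈ Set.Ico (0:ℝ) 1)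
    (hint : ∀ n, ∃ j : ℤ, v n - u n - r n = j)
    (hdens : ∀ ε : ℝ, 0 < ε →
      Tendsto (fun N => (((Finset.range N).filter (fun n => ε < |r n|)).card : ℝ) / N) atTop (nhds 0))
    (c d : ℝ) (hc : 0 ≤ c) (hcd : c ≤ d) (hd : d ≤ 1) {δ : ℝ} (hδ : 0 < δ) :
    ∀ᶠ N in atTop, d - c - δ
      ≤ (((Finset.range N).filter (fun n => v n ∈ Set.Ico c d)).card : ℝ) / N := by
  rcases le_or_gt (d - c) δ with htriv | hnt
  · refine Filter.Eventually.of_forall fun N => ?_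
    have : (0:ℝ) ≤ (((Finset.range N).filter (fun n => v n ∈ Set.Ico c d)).card : ℝ) / N := by
      positivity
    linarith
  · set ε := δ / 4 with hε
    have hεpos : 0 < ε := by positivity
    have hab : c + ε < d - ε := by rw [hε]; linarith
    have hU := hu (c + ε) (d - ε) (by linarith) hab (by linarith)
    have hfiltu : ∀ N, (Finset.range N).filter (fun n => Int.fract (u n) ∈ Set.Ico (c+ε) (d-ε))
        = (Finset.range N).filter (fun n => u n ∈ Set.Ico (c+ε) (d-ε)) := by
      intro N
      refine Finset.filter_congr fun n _ => ?_
      rw [Int.fract_eq_self.2 ⟨(hu01 n).1, (hu01 n).2⟩]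
    simp only [hfiltu] at hU
    have h1 : ∀ᶠ N in atTop, d - c - 3*ε
        < (((Finset.range N).filter (fun n => u n ∈ Set.Ico (c+ε) (d-ε))).card : ℝ) / N :=
      hU.eventually (eventually_gt_nhds (by linarith))
    have h2 : ∀ᶠ N in atTop,
        (((Finset.range N).filter (fun n => ε < |r n|)).card : ℝ) / N < ε :=
      (hdens ε hεpos).eventually (eventually_lt_nhds hεpos)
    filter_upwards [h1, h2, eventually_gt_atTop 0] with N e1 e2 e3
    have hNpos : (0:ℝ) < N := by exact_mod_cast e3
    -- card inequality
    set A := (Finset.range N).filter (fun n => u n ∈ Set.Ico (c+ε) (d-ε)) with hA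
    set B := (Finset.range N).filter (fun n => ε < |r n|) with hB
    set C := (Finset.range N).filter (fun n => v n ∈ Set.Ico c d) with hC
    have hsub : A \ B ⊆ C := by
      intro n hn
      rw [Finset.mem_sdiff] at hn
      obtain ⟨hnA, hnB⟩ := hn
      rw [hA, Finset.mem_filter] at hnA
      rw [hC, Finset.mem_filter]
      refine ⟨hnA.1, ?_⟩
      have hrn : |r n| ≤ ε := by
        by_contra hcon
        exact hnB (by rw [hB, Finset.mem_filter]; exact ⟨hnA.1, by linarith [abs_nonneg (r n)]⟩)
      exact close_mem hc hd (hv01 n).1 (hv01 n).2 (hint n) hrn hnA.2.1 hnA.2.2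
    have hcard : (A.card : ℝ) ≤ C.card + B.card := by
      have h3 : A.card ≤ (A \ B).card + B.card := Finset.card_le_card_sdiff_add_card
      have h4 : (A \ B).card ≤ C.card := Finset.card_le_card hsub
      exact_mod_cast Nat.le_trans h3 (Nat.add_le_add_right h4 _)
    have : (A.card : ℝ) / N ≤ (C.card : ℝ) / N + (B.card : ℝ) / N := by
      rw [← add_div]
      gcongr
    calc d - c - δ = (d - c - 3*ε) - ε := by rw [hε]; ring
      _ ≤ (A.card : ℝ) / N - (B.card : ℝ) / N := by
          exact sub_le_sub (le_of_lt e1) (le_of_lt e2)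
      _ ≤ (C.card : ℝ) / N := by linarith

lemma udmod1_perturb {u v r : ℕ → ℝ}
    (hu : UDMod1 u) (hu01 : ∀ n, u n ∈ Set.Ico (0:ℝ) 1) (hv01 : ∀ n, v n ∈ Set.Ico (0:ℝ) 1)
    (hint : ∀ n, ∃ j : ℤ, v n - u n - r n = j)
    (hdens : ∀ ε : ℝ, 0 < ε →
      Tendsto (fun N => (((Finset.range N).filter (fun n => ε < |r n|)).card : ℝ) / N) atTop (nhds 0)) :
    UDMod1 v := by
  intro a b ha hab hb
  have hfiltv : ∀ (N : ℕ) (c d : ℝ),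
      (Finset.range N).filter (fun n => Int.fract (v n) ∈ Set.Ico c d)
        = (Finset.range N).filter (fun n => v n ∈ Set.Ico c d) := by
    intro N c d
    refine Finset.filter_congr fun n _ => ?_
    rw [Int.fract_eq_self.2 ⟨(hv01 n).1, (hv01 n).2⟩]
  simp only [hfiltv]
  -- partition identity
  have hpart : ∀ N : ℕ,
      ((Finset.range N).filter (fun n => v n ∈ Set.Ico (0:ℝ) a)).card
      + ((Finset.range N).filter (fun n => v n ∈ Set.Ico a b)).card
      + ((Finset.range N).filter (fun n => v n ∈ Set.Ico b 1)).card = N := by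
    intro N
    rw [Finset.card_filter, Finset.card_filter, Finset.card_filter,
      ← Finset.sum_add_distrib, ← Finset.sum_add_distrib]
    have hN1 : ∑ _n ∈ Finset.range N, 1 = N := by simp
    conv_rhs => rw [← hN1]
    refine Finset.sum_congr rfl fun n _ => ?_
    obtain ⟨h0, h1⟩ := hv01 n
    simp only [Set.mem_Ico]
    rcases lt_or_ge (v n) a with h | h
    · rw [if_pos ⟨h0, h⟩, if_neg (by push_neg; intro h'; linarith),
        if_neg (by push_neg; intro h'; linarith)]
    · rcases lt_or_ge (v n) b with h' | h'
      · rw [if_neg (by push_neg; intro; linarith), if_pos ⟨h, h'⟩,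
          if_neg (by push_neg; intro h''; linarith)]
      · rw [if_neg (by push_neg; intro; linarith), if_neg (by push_neg; intro; linarith),
          if_pos ⟨h', h1⟩]
  refine Metric.tendsto_atTop.mpr fun ε hε => ?_
  have h1 := elb hu hu01 hv01 hint hdens a b ha (le_of_lt hab) hb (show (0:ℝ) < ε/2 by linarith)
  have h2 := elb hu hu01 hv01 hint hdens 0 a le_rfl ha (by linarith) (show (0:ℝ) < ε/4 by linarith)
  have h3 := elb hu hu01 hv01 hint hdens b 1 (by linarith) hb le_rfl (show (0:ℝ) < ε/4 by linarith)
  have hcomb := ((h1.and h2).and (h3.and (eventually_gt_atTop 0)))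
  rw [eventually_atTop] at hcomb
  obtain ⟨N0, hN0⟩ := hcomb
  refine ⟨N0, fun N hN => ?_⟩
  obtain ⟨⟨e1, e2⟩, e3, e4⟩ := hN0 N hN
  have hNpos : (0:ℝ) < N := by exact_mod_cast e4
  set c1 := ((Finset.range N).filter (fun n => v n ∈ Set.Ico (0:ℝ) a)).card with hc1
  set c2 := ((Finset.range N).filter (fun n => v n ∈ Set.Ico a b)).card with hc2
  set c3 := ((Finset.range N).filter (fun n => v n ∈ Set.Ico b 1)).card with hc3
  have hsum : (c1 : ℝ) + c2 + c3 = N := by exact_mod_cast hpart N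
  have hupper : (c2 : ℝ) / N ≤ b - a + ε/2 := by
    have : (c2 : ℝ) / N = 1 - (c1 : ℝ) / N - (c3 : ℝ) / N := by
      field_simp
      linarith
    rw [this]
    simp only [sub_zero] at e2
    have e3' : 1 - b - ε/4 ≤ (c3 : ℝ) / N := by linarith
    linarith
  rw [Real.dist_eq, abs_lt]
  constructor <;> [skip; skip] <;> [linarith; linarith]

lemma density_of_cesaro {d : ℕ → ℝ} {r : ℕ → ℝ} (hd0 : ∀ n, 0 ≤ d n)
    (hrd : ∀ n, |r n| ≤ d (n + 1))
    (h : Tendsto (fun N : ℕ => (1 / (N : ℝ)) * ∑ n ∈ Finset.Icc 1 N, d n) atTop (nhds 0))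
    {ε : ℝ} (hε : 0 < ε) :
    Tendsto (fun N => (((Finset.range N).filter (fun n => ε < |r n|)).card : ℝ) / N)
      atTop (nhds 0) := by
  have key : ∀ N : ℕ, (((Finset.range N).filter (fun n => ε < |r n|)).card : ℝ) / N
      ≤ (1/ε) * ((1 / (N : ℝ)) * ∑ n ∈ Finset.Icc 1 N, d n) := by
    intro N
    rcases Nat.eq_zero_or_pos N with hN | hN
    · subst hN; simp
    have hNpos : (0:ℝ) < N := by exact_mod_cast hN
    set Bad := (Finset.range N).filter (fun n => ε < |r n|) with hBad
    set D := (Finset.Icc 1 N).filter (fun m => ε ≤ d m) with hD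
    have hinj : (Bad.card) ≤ D.card := by
      refine Finset.card_le_card_of_injOn (fun n => n + 1) ?_ ?_
      · intro n hn
        rw [hBad, Finset.mem_coe, Finset.mem_filter, Finset.mem_range] at hn
        show n + 1 ∈ D
        rw [hD, Finset.mem_filter, Finset.mem_Icc]
        exact ⟨⟨by omega, by omega⟩, le_trans (le_of_lt hn.2) (hrd n)⟩
      · intro a _ b _ hab
        simpa using hab
    have hmarkov : ε * (D.card : ℝ) ≤ ∑ n ∈ Finset.Icc 1 N, d n := by
      calc ε * (D.card : ℝ) = ∑ _n ∈ D, ε := by rw [Finset.sum_const, nsmul_eq_mul]; ring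
        _ ≤ ∑ n ∈ D, d n := Finset.sum_le_sum fun n hn => by
            rw [hD, Finset.mem_filter] at hn; exact hn.2
        _ ≤ ∑ n ∈ Finset.Icc 1 N, d n := Finset.sum_le_sum_of_subset_of_nonneg
            (Finset.filter_subset _ _) (fun n _ _ => hd0 n)
    have hb : (Bad.card : ℝ) ≤ (1/ε) * ∑ n ∈ Finset.Icc 1 N, d n := by
      have h1 : (Bad.card : ℝ) ≤ (D.card : ℝ) := by exact_mod_cast hinj
      have h2 : (D.card : ℝ) ≤ (1/ε) * ∑ n ∈ Finset.Icc 1 N, d n := by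
        rw [one_div, ← div_eq_inv_mul]
        exact (le_div_iff₀' hε).mpr hmarkov
      linarith
    rw [div_le_iff₀ hNpos]
    calc (Bad.card : ℝ) ≤ (1/ε) * ∑ n ∈ Finset.Icc 1 N, d n := hb
      _ = (1/ε) * ((1 / (N : ℝ)) * ∑ n ∈ Finset.Icc 1 N, d n) * N := by
          field_simp
  have hpos : ∀ N : ℕ, (0:ℝ) ≤ (((Finset.range N).filter (fun n => ε < |r n|)).card : ℝ) / N := by
    intro N; positivity
  have hlim : Tendsto (fun N : ℕ => (1/ε) * ((1 / (N : ℝ)) * ∑ n ∈ Finset.Icc 1 N, d n))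
      atTop (nhds 0) := by
    have := h.const_mul (1/ε)
    simpa using this
  exact tendsto_of_tendsto_of_tendsto_of_le_of_le tendsto_const_nhds hlim hpos key

end Stmt1Aux

theorem stmt_1 (q : ℕ → ℕ) (hq : BasicSeq q) (x y : ℝ) (E F : ℕ → ℕ)
    (hE : IsCantorDigits q E x) (hF : IsCantorDigits q F y)
    (hx : QDistNormal q x)
    (h : Filter.Tendsto
      (fun N : ℕ => (1 / (N : ℝ)) * ∑ n ∈ Finset.Icc 1 N, (|(E n : ℝ) - (F n : ℝ)| + 1) / (q n : ℝ))
      Filter.atTop (nhds 0)) :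
    QDistNormal q y := by
  choose r hr using fun n => key_rel hq hE hF n
  refine udmod1_perturb (u := fun n => TQ q n x) (r := r) hx ?_ ?_ ?_ ?_
  · intro n; exact ⟨Int.fract_nonneg _, Int.fract_lt_one _⟩
  · intro n; exact ⟨Int.fract_nonneg _, Int.fract_lt_one _⟩
  · intro n
    obtain ⟨⟨j, hj⟩, -⟩ := hr n
    exact ⟨j, hj⟩
  · intro ε hε
    refine density_of_cesaro (d := fun n => (|(E n : ℝ) - (F n : ℝ)| + 1) / (q n : ℝ)) ?_ ?_ h hε
    · intro n; positivity
    · intro n; exact (hr n).2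
end
end

section
/- Let Q = (q_n) be a basic sequence satisfying lim_{N→∞} (1/N) ∑_{n=1}^N 1/q_n = 0, and suppose x = E_0.E_1E_2… w.r.t. Q is Q-distribution normal. If y = F_0.F_1F_2… w.r.t. Q satisfies lim_{n→∞} |E_n − F_n|/q_n = 0, then y is Q-distribution normal. -/
open Filter Finset MeasureTheory

noncomputable section
open scoped Classical

variable {q E : ℕ → ℕ}

lemma cp_succ (q : ℕ → ℕ) (n : ℕ) : cantorProd q (n+1) = cantorProd q n * q (n+1) := by
  unfold cantorProd
  rw [Finset.prod_Icc_succ_top (by omega)]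

lemma cp_pos (hq : BasicSeq q) (n : ℕ) : 0 < cantorProd q n := by
  apply Finset.prod_pos
  intro i hi
  have := hq i (Finset.mem_Icc.mp hi).1
  omega

lemma cp_mul_le (hq : BasicSeq q) (n m : ℕ) :
    cantorProd q n * 2 ^ m ≤ cantorProd q (n + m) := by
  induction m with
  | zero => simp
  | succ k ih =>
    have h2 : 2 ≤ q (n + k + 1) := hq _ (by omega)
    calc cantorProd q n * 2 ^ (k+1) = cantorProd q n * 2 ^ k * 2 := by ring
    _ ≤ cantorProd q (n+k) * q (n+k+1) := by
        exact Nat.mul_le_mul ih h2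
    _ = cantorProd q (n + (k+1)) := by rw [← cp_succ]; ring_nf

lemma cp_ratio_le (hq : BasicSeq q) (n m : ℕ) :
    (cantorProd q n : ℝ) / cantorProd q (n+m) ≤ (1/2) ^ m := by
  rw [div_le_iff₀ (by exact_mod_cast cp_pos hq (n+m))]
  have := cp_mul_le hq n m
  have h2 : ((cantorProd q n * 2 ^ m : ℕ) : ℝ) ≤ (cantorProd q (n+m) : ℕ) := by exact_mod_cast this
  push_cast at h2
  have : (1/2:ℝ)^m * 2^m = 1 := by
    rw [← mul_pow]; norm_num
  nlinarith [pow_pos (by norm_num : (0:ℝ) < 1/2) m, pow_pos (by norm_num : (0:ℝ) < 2) m]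

def tailSum (q E : ℕ → ℕ) (n : ℕ) : ℝ :=
  ∑' m, (E (n+m+1) : ℝ) * ((cantorProd q n : ℝ) / cantorProd q (n+m+1))


lemma cp_div_eq (hq : BasicSeq q) (n m : ℕ) :
    (q (n+m+1) : ℝ) * ((cantorProd q n : ℝ) / cantorProd q (n+m+1)) =
      (cantorProd q n : ℝ) / cantorProd q (n+m) := by
  have h1 : (0:ℝ) < cantorProd q (n+m) := by exact_mod_cast cp_pos hq (n+m)
  have h2 : (0:ℝ) < q (n+m+1) := by have := hq (n+m+1) (by omega); positivity
  rw [show n+m+1 = (n+m)+1 from rfl, cp_succ]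
  push_cast
  field_simp

lemma term_le_geom (hq : BasicSeq q) (hlt : ∀ k, 1 ≤ k → E k < q k) (n m : ℕ) :
    (E (n+m+1) : ℝ) * ((cantorProd q n : ℝ) / cantorProd q (n+m+1)) ≤ (1/2)^m := by
  have hE : (E (n+m+1) : ℝ) ≤ q (n+m+1) := by
    exact_mod_cast (hlt (n+m+1) (by omega)).le
  have hr : (0:ℝ) ≤ (cantorProd q n : ℝ) / cantorProd q (n+m+1) := by positivity
  calc (E (n+m+1) : ℝ) * ((cantorProd q n : ℝ) / cantorProd q (n+m+1))
      ≤ (q (n+m+1) : ℝ) * ((cantorProd q n : ℝ) / cantorProd q (n+m+1)) :=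
        mul_le_mul_of_nonneg_right hE hr
    _ = (cantorProd q n : ℝ) / cantorProd q (n+m) := cp_div_eq hq n m
    _ ≤ (1/2)^m := cp_ratio_le hq n m

lemma summable_tail (hq : BasicSeq q) (hlt : ∀ k, 1 ≤ k → E k < q k) (n : ℕ) :
    Summable (fun m => (E (n+m+1) : ℝ) * ((cantorProd q n : ℝ) / cantorProd q (n+m+1))) :=
  Summable.of_nonneg_of_le (fun m => by positivity) (term_le_geom hq hlt n)
    (summable_geometric_of_lt_one (by norm_num) (by norm_num : (1/2:ℝ) < 1))

lemma tailSum_nonneg (hq : BasicSeq q) (n : ℕ) : 0 ≤ tailSum q E n :=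
  tsum_nonneg (fun m => by positivity)


lemma tailSum_lt_one (hq : BasicSeq q) (hlt : ∀ k, 1 ≤ k → E k < q k)
    (hinf : {k | 1 ≤ k ∧ E k ≠ q k - 1}.Infinite) (n : ℕ) : tailSum q E n < 1 := by
  obtain ⟨k, hk_mem, hk_gt⟩ := hinf.exists_gt n
  obtain ⟨hk1, hkne⟩ := hk_mem
  set m₀ := k - n - 1 with hm₀
  have hkeq : k = n + m₀ + 1 := by omega
  have hq2 : 2 ≤ q k := hq k hk1
  have hEk : E k + 2 ≤ q k := by
    have := hlt k hk1; omega
  set u : ℕ → ℝ := fun m => (cantorProd q n : ℝ) / cantorProd q (n+m) with hu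
  have hu0 : u 0 = 1 := by
    simp only [hu, Nat.add_zero]
    have : (0:ℝ) < cantorProd q n := by exact_mod_cast cp_pos hq n
    field_simp
  have hunn : ∀ m, 0 ≤ u m := fun m => by positivity
  have hstep : ∀ m, ((q (n+m+1) : ℝ) - 1) * u (m+1) = u m - u (m+1) := by
    intro m
    have h := cp_div_eq hq n m
    simp only [hu, show n+(m+1) = n+m+1 from rfl]
    nlinarith [h]
  set c := u (m₀ + 1) with hc
  have hcpos : 0 < c := by
    have h1 : (0:ℝ) < cantorProd q n := by exact_mod_cast cp_pos hq n
    have h2 : (0:ℝ) < cantorProd q (n+(m₀+1)) := by exact_mod_cast cp_pos hq _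
    simp only [hc, hu]; positivity
  have key : ∀ M, m₀ < M →
      ∑ m ∈ Finset.range M, (E (n+m+1) : ℝ) * ((cantorProd q n : ℝ) / cantorProd q (n+m+1)) ≤ 1 - c := by
    intro M hM
    have hle : ∀ m ∈ Finset.range M,
        (E (n+m+1) : ℝ) * ((cantorProd q n : ℝ) / cantorProd q (n+m+1)) ≤
          (u m - u (m+1)) - (if m = m₀ then c else 0) := by
      intro m _
      have hrat : (cantorProd q n : ℝ) / cantorProd q (n+m+1) = u (m+1) := by
        simp only [hu, show n+(m+1) = n+m+1 from rfl]
      by_cases hmm : m = m₀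
      · have hk2 : n+m+1 = k := by omega
        have hEb : (E (n+m+1) : ℝ) ≤ (q (n+m+1) : ℝ) - 2 := by
          rw [hk2]
          have h2 := (Nat.cast_le (α := ℝ)).mpr hEk
          push_cast at h2; linarith
        have hcm : c = u (m+1) := by rw [hc, hmm]
        rw [if_pos hmm, hrat, hcm]
        nlinarith [hstep m, hunn (m+1), mul_le_mul_of_nonneg_right hEb (hunn (m+1))]
      · have hEb : (E (n+m+1) : ℝ) ≤ (q (n+m+1) : ℝ) - 1 := by
          have h1 : E (n+m+1) + 1 ≤ q (n+m+1) := hlt (n+m+1) (by omega)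
          have h2 := (Nat.cast_le (α := ℝ)).mpr h1
          push_cast at h2; linarith
        rw [if_neg hmm, hrat]
        nlinarith [hstep m, hunn (m+1), mul_le_mul_of_nonneg_right hEb (hunn (m+1))]
    calc ∑ m ∈ Finset.range M, (E (n+m+1) : ℝ) * ((cantorProd q n : ℝ) / cantorProd q (n+m+1))
        ≤ ∑ m ∈ Finset.range M, ((u m - u (m+1)) - (if m = m₀ then c else 0)) :=
          Finset.sum_le_sum hle
      _ = (u 0 - u M) - c := by
          rw [Finset.sum_sub_distrib, Finset.sum_range_sub' u M,
            Finset.sum_ite_eq' (Finset.range M) m₀ (fun _ => c)]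
          simp [Finset.mem_range.mpr hM]
      _ ≤ 1 - c := by rw [hu0]; nlinarith [hunn M]
  have htend := (summable_tail hq hlt n).hasSum.tendsto_sum_nat
  have hle1 : tailSum q E n ≤ 1 - c := by
    refine le_of_tendsto htend ?_
    filter_upwards [eventually_gt_atTop m₀] with M hM
    exact key M hM
  linarith

lemma cp_zero (q : ℕ → ℕ) : cantorProd q 0 = 1 := by simp [cantorProd]

lemma summable_base (hq : BasicSeq q) (hlt : ∀ k, 1 ≤ k → E k < q k) :
    Summable (fun m => (E (m+1) : ℝ) / cantorProd q (m+1)) := by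
  have h := summable_tail (E:=E) hq hlt 0
  simpa [cp_zero, div_eq_mul_inv] using h

lemma TQ_eq_tailSum {x : ℝ} (hq : BasicSeq q) (hE : IsCantorDigits q E x) (n : ℕ) :
    TQ q n x = tailSum q E n := by
  obtain ⟨hlt, hinf, hx⟩ := hE
  have hsum0 := summable_base hq hlt
  -- front terms are naturals
  have hint : ∀ m, m < n → (cantorProd q n : ℝ) * ((E (m+1) : ℝ) / cantorProd q (m+1)) =
      ((E (m+1) * ∏ i ∈ Finset.Ioc (m+1) n, q i : ℕ) : ℝ) := by
    intro m hm
    have hPfac : cantorProd q n = cantorProd q (m+1) * ∏ i ∈ Finset.Ioc (m+1) n, q i := by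
      unfold cantorProd
      rw [show Finset.Icc 1 n = Finset.Ioc 0 n from rfl,
        show Finset.Icc 1 (m+1) = Finset.Ioc 0 (m+1) from rfl]
      exact (Finset.prod_Ioc_consecutive q (Nat.zero_le _) (by omega)).symm
    have hp : (0:ℝ) < cantorProd q (m+1) := by exact_mod_cast cp_pos hq (m+1)
    rw [hPfac]; push_cast; field_simp
  set z : ℤ := (cantorProd q n : ℤ) * ⌊x⌋ +
    ((∑ m ∈ Finset.range n, E (m+1) * ∏ i ∈ Finset.Ioc (m+1) n, q i : ℕ) : ℤ) with hz
  have key : (cantorProd q n : ℝ) * x = (z : ℝ) + tailSum q E n := by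
    rw [hx, mul_add, ← tsum_mul_left]
    rw [← Summable.sum_add_tsum_nat_add n (hsum0.mul_left (cantorProd q n : ℝ))]
    have h1 : ∑ m ∈ Finset.range n, (cantorProd q n : ℝ) * ((E (m+1) : ℝ) / cantorProd q (m+1))
        = ((∑ m ∈ Finset.range n, E (m+1) * ∏ i ∈ Finset.Ioc (m+1) n, q i : ℕ) : ℝ) := by
      push_cast
      exact Finset.sum_congr rfl (fun m hm => by
        have := hint m (Finset.mem_range.mp hm)
        push_cast at this ⊢
        exact this)
    have h2 : ∑' m, (cantorProd q n : ℝ) * ((E (m+n+1) : ℝ) / cantorProd q (m+n+1))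
        = tailSum q E n := by
      apply tsum_congr
      intro m
      rw [show m+n+1 = n+m+1 from by omega]
      have hp : (0:ℝ) < cantorProd q (n+m+1) := by exact_mod_cast cp_pos hq (n+m+1)
      field_simp
    rw [h1, h2, hz]
    push_cast
    ring
  have h01 : 0 ≤ tailSum q E n ∧ tailSum q E n < 1 :=
    ⟨tailSum_nonneg hq n, tailSum_lt_one hq hlt hinf n⟩
  rw [TQ, key, Int.fract_intCast_add, Int.fract_eq_self.mpr h01]

lemma tail_rec (hq : BasicSeq q) (hlt : ∀ k, 1 ≤ k → E k < q k) (n : ℕ) :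
    tailSum q E n = ((E (n+1) : ℝ) + tailSum q E (n+1)) / q (n+1) := by
  have hsm := summable_tail (E:=E) hq hlt n
  have hqpos : (0:ℝ) < q (n+1) := by
    have := hq (n+1) (by omega); positivity
  have hPpos : (0:ℝ) < cantorProd q n := by exact_mod_cast cp_pos hq n
  have hP1pos : (0:ℝ) < cantorProd q (n+1) := by exact_mod_cast cp_pos hq (n+1)
  rw [tailSum, Summable.tsum_eq_zero_add hsm]
  have h0 : (E (n+0+1) : ℝ) * ((cantorProd q n : ℝ) / cantorProd q (n+0+1)) =
      (E (n+1) : ℝ) / q (n+1) := by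
    have : cantorProd q (n+1) = cantorProd q n * q (n+1) := cp_succ q n
    rw [show n+0+1 = n+1 from rfl, this]
    push_cast
    field_simp
  have hterm : ∀ m : ℕ, (E (n+(m+1)+1) : ℝ) * ((cantorProd q n : ℝ) / cantorProd q (n+(m+1)+1)) =
      ((q (n+1) : ℝ))⁻¹ * ((E ((n+1)+m+1) : ℝ) *
        ((cantorProd q (n+1) : ℝ) / cantorProd q ((n+1)+m+1))) := by
    intro m
    have h1 : (n+(m+1)+1) = ((n+1)+m+1) := by omega
    have h2 : cantorProd q (n+1) = cantorProd q n * q (n+1) := cp_succ q n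
    rw [h1, h2]
    have hPm : (0:ℝ) < cantorProd q ((n+1)+m+1) := by exact_mod_cast cp_pos hq _
    push_cast
    field_simp
  rw [tsum_congr hterm, tsum_mul_left, h0, ← tailSum]
  field_simp

lemma tail_diff_bound {F : ℕ → ℕ} (hq : BasicSeq q)
    (hltE : ∀ k, 1 ≤ k → E k < q k) (hltF : ∀ k, 1 ≤ k → F k < q k)
    (hinfE : {k | 1 ≤ k ∧ E k ≠ q k - 1}.Infinite)
    (hinfF : {k | 1 ≤ k ∧ F k ≠ q k - 1}.Infinite) (n : ℕ) :
    |tailSum q E n - tailSum q F n| ≤ (|(E (n+1) : ℝ) - F (n+1)| + 1) / q (n+1) := by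
  have hqpos : (0:ℝ) < q (n+1) := by
    have := hq (n+1) (by omega); positivity
  rw [tail_rec hq hltE n, tail_rec (E:=F) hq hltF n, div_sub_div_same, abs_div,
    abs_of_pos hqpos]
  have h1 : 0 ≤ tailSum q E (n+1) := tailSum_nonneg hq (n+1)
  have h2 : tailSum q E (n+1) < 1 := tailSum_lt_one hq hltE hinfE (n+1)
  have h3 : 0 ≤ tailSum q F (n+1) := tailSum_nonneg (E:=F) hq (n+1)
  have h4 : tailSum q F (n+1) < 1 := tailSum_lt_one (E:=F) hq hltF hinfF (n+1)
  gcongr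
  calc |((E (n+1) : ℝ) + tailSum q E (n+1)) - ((F (n+1) : ℝ) + tailSum q F (n+1))|
      ≤ |(E (n+1) : ℝ) - F (n+1)| + |tailSum q E (n+1) - tailSum q F (n+1)| := by
        have := abs_add_le ((E (n+1) : ℝ) - F (n+1)) (tailSum q E (n+1) - tailSum q F (n+1))
        calc |((E (n+1) : ℝ) + tailSum q E (n+1)) - ((F (n+1) : ℝ) + tailSum q F (n+1))|
            = |((E (n+1) : ℝ) - F (n+1)) + (tailSum q E (n+1) - tailSum q F (n+1))| := by ring_nf
          _ ≤ _ := this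
    _ ≤ |(E (n+1) : ℝ) - F (n+1)| + 1 := by
        have : |tailSum q E (n+1) - tailSum q F (n+1)| ≤ 1 := abs_sub_le_iff.mpr ⟨by linarith, by linarith⟩
        linarith


lemma ud_stable (z w δ : ℕ → ℝ) (hz01 : ∀ n, z n ∈ Set.Ico (0:ℝ) 1)
    (hw01 : ∀ n, w n ∈ Set.Ico (0:ℝ) 1) (hδnn : ∀ n, 0 ≤ δ n)
    (hdist : ∀ n, |z n - w n| ≤ δ n)
    (hδ : Filter.Tendsto (fun N : ℕ => (∑ n ∈ Finset.range N, δ n) / N) atTop (nhds 0))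
    (hz : UDMod1 z) : UDMod1 w := by
  have hfz : ∀ n, Int.fract (z n) = z n := fun n => Int.fract_eq_self.mpr (hz01 n)
  have hfw : ∀ n, Int.fract (w n) = w n := fun n => Int.fract_eq_self.mpr (hw01 n)
  intro a b ha hab hb1
  rw [Metric.tendsto_atTop]
  intro ε hε
  set t : ℝ := min (ε/8) ((b-a)/4) with htdef
  have ht : 0 < t := lt_min (by linarith) (by linarith)
  have ht8 : t ≤ ε/8 := min_le_left _ _
  have ht4 : t ≤ (b-a)/4 := min_le_right _ _
  set a1 : ℝ := max (a - t) 0 with ha1def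
  set b1 : ℝ := min (b + t) 1 with hb1def
  have ha1 : 0 ≤ a1 := le_max_right _ _
  have ha1a : a1 ≤ a := max_le (by linarith) ha
  have hbb1 : b ≤ b1 := le_min (by linarith) hb1
  have hb11 : b1 ≤ 1 := min_le_right _ _
  have hab1 : a1 < b1 := lt_of_le_of_lt ha1a (lt_of_lt_of_le hab hbb1)
  have hb1a1 : b1 - a1 ≤ (b - a) + 2*t := by
    have : a - t ≤ a1 := le_max_left _ _
    have : b1 ≤ b + t := min_le_left _ _
    nlinarith [le_max_left (a-t) 0]
  have h1 := hz a1 b1 ha1 hab1 hb11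
  have h2 := hz (a+t) (b-t) (by linarith) (by linarith) (by linarith)
  rw [Metric.tendsto_atTop] at h1 h2 hδ
  obtain ⟨N₁, hN₁⟩ := h1 (ε/8) (by linarith)
  obtain ⟨N₂, hN₂⟩ := h2 (ε/8) (by linarith)
  obtain ⟨N₃, hN₃⟩ := hδ (t * (ε/8)) (by positivity)
  refine ⟨max (max N₁ N₂) (max N₃ 1), fun N hN => ?_⟩
  have hNN₁ : N ≥ N₁ := le_trans (le_trans (le_max_left _ _) (le_max_left _ _)) hN
  have hNN₂ : N ≥ N₂ := le_trans (le_trans (le_max_right _ _) (le_max_left _ _)) hN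
  have hNN₃ : N ≥ N₃ := le_trans (le_trans (le_max_left _ _) (le_max_right _ _)) hN
  have hN1 : 1 ≤ N := le_trans (le_trans (le_max_right _ _) (le_max_right _ _)) hN
  have hNpos : (0:ℝ) < N := by exact_mod_cast hN1
  -- bad set
  set Bad := (Finset.range N).filter (fun n => t < δ n) with hBad
  have hBadcard : (Bad.card : ℝ) / N < ε/8 := by
    have hsum : (Bad.card : ℝ) * t ≤ ∑ n ∈ Finset.range N, δ n := by
      calc (Bad.card : ℝ) * t = ∑ _n ∈ Bad, t := by rw [Finset.sum_const, nsmul_eq_mul]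
        _ ≤ ∑ n ∈ Bad, δ n := Finset.sum_le_sum (fun n hn => (Finset.mem_filter.mp hn).2.le)
        _ ≤ ∑ n ∈ Finset.range N, δ n :=
            Finset.sum_le_sum_of_subset_of_nonneg (Finset.filter_subset _ _)
              (fun n _ _ => hδnn n)
    have hd := hN₃ N hNN₃
    rw [Real.dist_eq, sub_zero] at hd
    have hd' : (∑ n ∈ Finset.range N, δ n) / N < t * (ε/8) :=
      lt_of_abs_lt hd
    have hX : (Bad.card : ℝ) / N * t < ε/8 * t := by
      have h1 : (Bad.card : ℝ) * t / N ≤ (∑ n ∈ Finset.range N, δ n) / N := by gcongr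
      have h2 : (Bad.card : ℝ) / N * t = (Bad.card : ℝ) * t / N := by ring
      rw [h2]
      calc (Bad.card : ℝ) * t / N ≤ (∑ n ∈ Finset.range N, δ n) / N := h1
        _ < t * (ε/8) := hd'
        _ = ε/8 * t := by ring
    exact lt_of_mul_lt_mul_right hX ht.le
  -- counts
  set Cw := (Finset.range N).filter (fun n => Int.fract (w n) ∈ Set.Ico a b) with hCw
  set C1 := (Finset.range N).filter (fun n => Int.fract (z n) ∈ Set.Ico a1 b1) with hC1
  set C2 := (Finset.range N).filter (fun n => Int.fract (z n) ∈ Set.Ico (a+t) (b-t)) with hC2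
  have hup : Cw ⊆ C1 ∪ Bad := by
    intro n hn
    obtain ⟨hnr, hnw⟩ := Finset.mem_filter.mp hn
    rw [hfw n] at hnw
    rcases le_or_gt (δ n) t with hδn | hδn
    · apply Finset.mem_union_left
      refine Finset.mem_filter.mpr ⟨hnr, ?_⟩
      rw [hfz n]
      have habs := abs_le.mp (hdist n)
      obtain ⟨hz0, hz1⟩ := hz01 n
      obtain ⟨hwa, hwb⟩ := hnw
      constructor
      · exact max_le (by linarith) hz0
      · exact lt_min (by linarith) hz1
    · exact Finset.mem_union_right _ (Finset.mem_filter.mpr ⟨hnr, hδn⟩)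
  have hlow : C2 ⊆ Cw ∪ Bad := by
    intro n hn
    obtain ⟨hnr, hnz⟩ := Finset.mem_filter.mp hn
    rw [hfz n] at hnz
    rcases le_or_gt (δ n) t with hδn | hδn
    · apply Finset.mem_union_left
      refine Finset.mem_filter.mpr ⟨hnr, ?_⟩
      rw [hfw n]
      have habs := abs_le.mp (hdist n)
      obtain ⟨hza, hzb⟩ := hnz
      exact ⟨by linarith, by linarith⟩
    · exact Finset.mem_union_right _ (Finset.mem_filter.mpr ⟨hnr, hδn⟩)
  have hupcard : (Cw.card : ℝ) ≤ C1.card + Bad.card := by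
    have := Finset.card_le_card hup
    have h2 := Finset.card_union_le C1 Bad
    exact_mod_cast le_trans this h2
  have hlowcard : (C2.card : ℝ) ≤ Cw.card + Bad.card := by
    have := Finset.card_le_card hlow
    have h2 := Finset.card_union_le Cw Bad
    exact_mod_cast le_trans this h2
  have hd1 := hN₁ N hNN₁
  have hd2 := hN₂ N hNN₂
  rw [Real.dist_eq] at hd1 hd2
  have hd1' := abs_lt.mp hd1
  have hd2' := abs_lt.mp hd2
  rw [Real.dist_eq, abs_lt]
  have hCwub : (Cw.card : ℝ)/N ≤ (C1.card : ℝ)/N + (Bad.card : ℝ)/N := by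
    rw [← add_div]; gcongr
  have hCwlb : (C2.card : ℝ)/N - (Bad.card : ℝ)/N ≤ (Cw.card : ℝ)/N := by
    have : (C2.card : ℝ)/N ≤ (Cw.card : ℝ)/N + (Bad.card : ℝ)/N := by
      rw [← add_div]; gcongr
    linarith
  constructor
  · linarith [hd2'.1, hCwlb, hBadcard, ht8]
  · linarith [hd1'.2, hCwub, hBadcard, hb1a1, ht8]

theorem stmt_2 (q : ℕ → ℕ) (hq : BasicSeq q)
    (hQ : Filter.Tendsto (fun N : ℕ => (1 / (N : ℝ)) * ∑ n ∈ Finset.Icc 1 N, 1 / (q n : ℝ))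
      Filter.atTop (nhds 0))
    (x y : ℝ) (E F : ℕ → ℕ)
    (hE : IsCantorDigits q E x) (hF : IsCantorDigits q F y)
    (hx : QDistNormal q x)
    (h : Filter.Tendsto (fun n => |(E n : ℝ) - (F n : ℝ)| / (q n : ℝ)) Filter.atTop (nhds 0)) :
    QDistNormal q y := by
  have hq1 : ∀ n : ℕ, (0:ℝ) < q (n+1) := fun n => by
    have := hq (n+1) (by omega); positivity
  apply ud_stable (fun n => TQ q n x) (fun n => TQ q n y)
    (fun n => (|(E (n+1) : ℝ) - (F (n+1) : ℝ)| + 1) / (q (n+1) : ℝ))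
  · exact fun n => ⟨Int.fract_nonneg _, Int.fract_lt_one _⟩
  · exact fun n => ⟨Int.fract_nonneg _, Int.fract_lt_one _⟩
  · intro n
    have := hq1 n
    positivity
  · intro n
    rw [TQ_eq_tailSum hq hE n, TQ_eq_tailSum hq hF n]
    exact tail_diff_bound hq hE.1 hF.1 hE.2.1 hF.2.1 n
  · -- Cesàro average of δ tends to 0
    have hg : Filter.Tendsto (fun n => |(E (n+1) : ℝ) - (F (n+1) : ℝ)| / (q (n+1) : ℝ))
        atTop (nhds 0) := h.comp (tendsto_add_atTop_nat 1)
    have hc1 := hg.cesaro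
    have hicc : ∀ N : ℕ, ∑ n ∈ Finset.Icc 1 N, 1/(q n : ℝ) = ∑ i ∈ Finset.range N, 1/(q (i+1) : ℝ) := by
      intro N
      rw [show Finset.Icc 1 N = Finset.Ico 1 (N+1) from rfl, Finset.sum_Ico_eq_sum_range]
      simp [Nat.add_comm]
    have hc2 : Filter.Tendsto (fun N : ℕ => (N:ℝ)⁻¹ * ∑ i ∈ Finset.range N, 1 / (q (i+1) : ℝ))
        atTop (nhds 0) := by
      have heq2 : (fun N : ℕ => (N:ℝ)⁻¹ * ∑ i ∈ Finset.range N, 1/(q (i+1):ℝ))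
          = (fun N : ℕ => (1/(N:ℝ)) * ∑ n ∈ Finset.Icc 1 N, 1/(q n:ℝ)) := by
        funext N
        rw [hicc, one_div]
      rw [heq2]
      exact hQ
    have hsum := hc1.add hc2
    rw [add_zero] at hsum
    have heq : ∀ N : ℕ, (∑ n ∈ Finset.range N, (|(E (n+1) : ℝ) - (F (n+1) : ℝ)| + 1) / (q (n+1) : ℝ)) / N
        = (N:ℝ)⁻¹ * (∑ n ∈ Finset.range N, |(E (n+1) : ℝ) - (F (n+1) : ℝ)| / (q (n+1) : ℝ))
          + (N:ℝ)⁻¹ * (∑ i ∈ Finset.range N, 1 / (q (i+1) : ℝ)) := by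
      intro N
      rw [Finset.sum_congr rfl (fun n _ => add_div (|(E (n+1) : ℝ) - (F (n+1) : ℝ)|) 1 (q (n+1) : ℝ)),
        Finset.sum_add_distrib]
      ring
    simpa [heq] using hsum
  · exact hx
end
end
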